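/- arXiv:2501.18901 — 3 statements merged into one kernel-verified Lean document; each statement's English description precedes it below -/
import Mathlib

section
/- If two real-valued random variables X and Y have moment generating functions that exist (are finite) on an open interval around 0 and all their moments agree, i.e., E[X^n] = E[Y^n] for all natural numbers n, then X and Y have the same distribution. -/
open MeasureTheory Real Set Filter
open scoped FourierTransform

set_option linter.unusedSectionVars false

section Aux

variable {Ω : Type*} [MeasurableSpace Ω] {μ : Measure Ω} [IsProbabilityMeasure μ]


/-- exp(b|X|) is integrable when exp(±bX) are. -/
lemma aux_int_exp_abs {X : Ω → ℝ} (hX : Measurable X) {b : ℝ}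
    (h1 : Integrable (fun ω => Real.exp (b * X ω)) μ)
    (h2 : Integrable (fun ω => Real.exp (-b * X ω)) μ) :
    Integrable (fun ω => Real.exp (|b| * |X ω|)) μ := by
  refine (h1.add h2).mono' ?_ ?_
  · exact ((Real.continuous_exp.comp (continuous_const.mul continuous_abs)).measurable.comp
      hX).aestronglyMeasurable
  · filter_upwards with ω
    have : |b| * |X ω| = |b * X ω| := (abs_mul b (X ω)).symm
    rw [Real.norm_eq_abs, abs_of_nonneg (Real.exp_nonneg _), this]
    rcases abs_cases (b * X ω) with ⟨h, _⟩ | ⟨h, _⟩ <;> rw [h]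
    · exact le_add_of_nonneg_right (Real.exp_nonneg _)
    · have : -(b * X ω) = -b * X ω := by ring
      rw [this]
      exact le_add_of_nonneg_left (Real.exp_nonneg _)

/-- Part A: the mgf is the sum of the moment series. -/
lemma aux_mgf_eq_tsum {X : Ω → ℝ} (hX : Measurable X) {t : ℝ}
    (hint : Integrable (fun ω => Real.exp (|t| * |X ω|)) μ) :
    ∫ ω, Real.exp (t * X ω) ∂μ = ∑' n : ℕ, t ^ n / n.factorial * ∫ ω, X ω ^ n ∂μ := by
  have hexp : ∀ ω, Real.exp (t * X ω) = ∑' n : ℕ, (t * X ω) ^ n / n.factorial := by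
    intro ω
    rw [Real.exp_eq_exp_ℝ, NormedSpace.exp_eq_tsum_div]
  calc ∫ ω, Real.exp (t * X ω) ∂μ
      = ∫ ω, ∑' n : ℕ, (t * X ω) ^ n / n.factorial ∂μ := by simp_rw [hexp]
    _ = ∑' n : ℕ, ∫ ω, (t * X ω) ^ n / n.factorial ∂μ := by
        apply integral_tsum
        · intro n
          exact (((hX.const_mul t).pow_const n).div_const _).aestronglyMeasurable
        · -- summability of lintegrals
          have key : ∑' n : ℕ, ∫⁻ ω, ‖(t * X ω) ^ n / n.factorial‖₊ ∂μ
              = ∫⁻ ω, ∑' n : ℕ, ‖(t * X ω) ^ n / n.factorial‖₊ ∂μ := by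
            rw [lintegral_tsum]
            intro n
            exact (((hX.const_mul t).pow_const n).div_const _).nnnorm.coe_nnreal_ennreal.aemeasurable
          simp only [enorm_eq_nnnorm]
          rw [key]
          have hbound : ∀ ω, (∑' n : ℕ, (‖(t * X ω) ^ n / n.factorial‖₊ : ENNReal))
              = ENNReal.ofReal (Real.exp (|t| * |X ω|)) := by
            intro ω
            have hsum : Summable (fun n : ℕ => |t * X ω| ^ n / n.factorial) :=
              Real.summable_pow_div_factorial _
            rw [Real.exp_eq_exp_ℝ, NormedSpace.exp_eq_tsum_div,
              ENNReal.ofReal_tsum_of_nonneg (fun n => by positivity)]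
            · congr 1
              ext n
              rw [← ENNReal.ofReal_coe_nnreal]
              congr 1
              simp only [coe_nnnorm, Real.norm_eq_abs, abs_div, abs_pow, abs_mul]
              rw [Nat.abs_cast]
            · convert hsum using 2 with n
              rw [abs_mul, mul_pow]
          simp_rw [hbound]
          rw [← MeasureTheory.lintegral_ofReal_ne_top_iff_integrable] at hint
          · exact hint
          · exact ((Real.continuous_exp.comp (continuous_const.mul
              continuous_abs)).measurable.comp hX).aestronglyMeasurable
          · filter_upwards with ω using Real.exp_nonneg _
    _ = ∑' n : ℕ, t ^ n / n.factorial * ∫ ω, X ω ^ n ∂μ := by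
        congr 1; ext n
        have h : ∀ ω, (t * X ω) ^ n / (n.factorial : ℝ)
            = (t ^ n / n.factorial) * X ω ^ n := by
          intro ω; rw [mul_pow]; ring
        simp_rw [h]
        exact integral_const_mul _ _

/-- The complex mgf is analytic on the strip. -/
lemma aux_analytic {X : Ω → ℝ} (hX : Measurable X) {ε : ℝ} (hε : 0 < ε)
    (hmgf : ∀ t : ℝ, |t| < ε → Integrable (fun ω => Real.exp (t * X ω)) μ) :
    AnalyticOnNhd ℂ (fun z => ∫ ω, Complex.exp (z * X ω) ∂μ) {z : ℂ | |z.re| < ε} := by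
  have hopen : IsOpen {z : ℂ | |z.re| < ε} :=
    isOpen_lt (by continuity) continuous_const
  refine DifferentiableOn.analyticOnNhd ?_ hopen
  intro z₀ hz₀
  simp only [mem_setOf_eq] at hz₀
  set δ : ℝ := (ε - |z₀.re|) / 3 with hδdef
  have hδ : 0 < δ := by rw [hδdef]; linarith
  have hb : |z₀.re| + 2 * δ < ε := by rw [hδdef]; linarith [abs_nonneg z₀.re]
  set b : ℝ := |z₀.re| + 2 * δ with hbdef
  have hbpos : 0 < b := by positivity
  have hmeas : ∀ z : ℂ, AEStronglyMeasurable (fun ω => Complex.exp (z * X ω)) μ := by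
    intro z
    exact ((Complex.continuous_exp.comp (continuous_const.mul
      Complex.continuous_ofReal)).measurable.comp hX).aestronglyMeasurable
  have hmeas' : AEStronglyMeasurable (fun ω => Complex.exp (z₀ * X ω) * (X ω : ℂ)) μ := by
    exact (((Complex.continuous_exp.comp (continuous_const.mul Complex.continuous_ofReal)).mul
      Complex.continuous_ofReal).measurable.comp hX).aestronglyMeasurable
  have hbint : Integrable (fun ω => δ⁻¹ * (Real.exp (b * X ω) + Real.exp (-b * X ω))) μ := by
    refine Integrable.const_mul ?_ _
    exact (hmgf b (by rwa [abs_of_pos hbpos])).add (hmgf (-b) (by rwa [abs_neg, abs_of_pos hbpos]))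
  have hF0 : Integrable (fun ω => Complex.exp (z₀ * X ω)) μ := by
    refine (hmgf z₀.re hz₀).mono' (hmeas z₀) ?_
    filter_upwards with ω
    have : ‖Complex.exp (z₀ * X ω)‖ = Real.exp (z₀.re * X ω) := by
      rw [Complex.norm_exp]
      congr 1
      simp [Complex.mul_re]
    rw [this]
  have key := hasDerivAt_integral_of_dominated_loc_of_deriv_le (F := fun z ω => Complex.exp (z * X ω))
    (F' := fun z ω => Complex.exp (z * X ω) * (X ω : ℂ))
    (bound := fun ω => δ⁻¹ * (Real.exp (b * X ω) + Real.exp (-b * X ω)))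
    (Metric.ball_mem_nhds z₀ hδ) (Filter.Eventually.of_forall fun z => hmeas z) hF0 hmeas' ?_ hbint ?_
  · exact (key.2.differentiableAt).differentiableWithinAt
  · -- the bound
    filter_upwards with ω z hz
    have h1 : ‖Complex.exp (z * X ω) * (X ω : ℂ)‖ = Real.exp (z.re * X ω) * |X ω| := by
      rw [norm_mul, Complex.norm_exp, Complex.norm_real]
      simp
    rw [h1]
    have hzre : |z.re| ≤ |z₀.re| + δ := by
      have : |z.re - z₀.re| ≤ ‖z - z₀‖ := by
        rw [← Complex.sub_re]; exact Complex.abs_re_le_norm _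
      have h2 : ‖z - z₀‖ < δ := by rwa [Metric.mem_ball, dist_eq_norm] at hz
      calc |z.re| ≤ |z₀.re| + |z.re - z₀.re| := by
            have := abs_sub_abs_le_abs_sub z.re z₀.re; linarith
        _ ≤ |z₀.re| + δ := by linarith
    have habs : |X ω| ≤ δ⁻¹ * Real.exp (δ * |X ω|) := by
      calc |X ω| = δ⁻¹ * (δ * |X ω|) := by field_simp
        _ ≤ δ⁻¹ * Real.exp (δ * |X ω|) := by
            apply mul_le_mul_of_nonneg_left _ (by positivity)
            linarith [Real.add_one_le_exp (δ * |X ω|)]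
    calc Real.exp (z.re * X ω) * |X ω|
        ≤ Real.exp ((|z₀.re| + δ) * |X ω|) * (δ⁻¹ * Real.exp (δ * |X ω|)) := by
          apply mul_le_mul _ habs (abs_nonneg _) (Real.exp_nonneg _)
          · apply Real.exp_le_exp.2
            calc z.re * X ω ≤ |z.re * X ω| := le_abs_self _
              _ = |z.re| * |X ω| := abs_mul _ _
              _ ≤ (|z₀.re| + δ) * |X ω| := by
                  apply mul_le_mul_of_nonneg_right hzre (abs_nonneg _)
      _ = δ⁻¹ * Real.exp (b * |X ω|) := by
          rw [mul_left_comm, ← Real.exp_add]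
          congr 2
          rw [hbdef]; ring
      _ ≤ δ⁻¹ * (Real.exp (b * X ω) + Real.exp (-b * X ω)) := by
          apply mul_le_mul_of_nonneg_left _ (by positivity)
          rcases abs_cases (X ω) with ⟨h, _⟩ | ⟨h, _⟩ <;> rw [h]
          · exact le_add_of_nonneg_right (Real.exp_nonneg _)
          · have : b * -X ω = -b * X ω := by ring
            rw [this]
            exact le_add_of_nonneg_left (Real.exp_nonneg _)
  · -- pointwise derivative
    filter_upwards with ω z _
    have h := (hasDerivAt_mul_const (x := z) ((X ω : ℝ) : ℂ)).cexp
    simpa using h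

lemma aux_charfun_eq {X Y : Ω → ℝ} (hX : Measurable X) (hY : Measurable Y)
    {ε : ℝ} (hε : 0 < ε)
    (hmgfX : ∀ t : ℝ, |t| < ε → Integrable (fun ω => Real.exp (t * X ω)) μ)
    (hmgfY : ∀ t : ℝ, |t| < ε → Integrable (fun ω => Real.exp (t * Y ω)) μ)
    (hmom : ∀ n : ℕ, ∫ ω, X ω ^ n ∂μ = ∫ ω, Y ω ^ n ∂μ) (y : ℝ) :
    ∫ ω, Complex.exp (Complex.I * y * X ω) ∂μ = ∫ ω, Complex.exp (Complex.I * y * Y ω) ∂μ := by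
  set S : Set ℂ := {z : ℂ | |z.re| < ε} with hS
  have hAX := aux_analytic hX hε hmgfX
  have hAY := aux_analytic hY hε hmgfY
  have hconn : IsPreconnected S := by
    have : S = Complex.reLm ⁻¹' Ioo (-ε) ε := by
      ext z; simp [hS, abs_lt, Complex.reLm]
    rw [this]
    exact ((convex_Ioo (-ε) ε).linear_preimage Complex.reLm).isPreconnected
  -- equality on real points
  have hreal : ∀ t : ℝ, |t| < ε →
      ∫ ω, Complex.exp ((t : ℂ) * X ω) ∂μ = ∫ ω, Complex.exp ((t : ℂ) * Y ω) ∂μ := by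
    intro t ht
    have habs : |(|t|)| < ε := (_root_.abs_abs t).symm ▸ ht
    have hiX := aux_int_exp_abs hX (hmgfX t ht) (hmgfX (-t) (by rwa [abs_neg]))
    have hiY := aux_int_exp_abs hY (hmgfY t ht) (hmgfY (-t) (by rwa [abs_neg]))
    have e1 : ∀ ω : Ω, Complex.exp ((t : ℂ) * X ω) = ((Real.exp (t * X ω) : ℝ) : ℂ) := by
      intro ω; rw [Complex.ofReal_exp, Complex.ofReal_mul]
    have e2 : ∀ ω : Ω, Complex.exp ((t : ℂ) * Y ω) = ((Real.exp (t * Y ω) : ℝ) : ℂ) := by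
      intro ω; rw [Complex.ofReal_exp, Complex.ofReal_mul]
    simp_rw [e1, e2]
    have A := Complex.ofRealCLM.integral_comp_comm (hmgfX t ht)
    have B := Complex.ofRealCLM.integral_comp_comm (hmgfY t ht)
    simp only [Complex.ofRealCLM_apply] at A B
    rw [A, B]
    congr 1
    rw [aux_mgf_eq_tsum hX hiX, aux_mgf_eq_tsum hY hiY]
    congr 1; ext n; rw [hmom n]
  -- frequently equal near 0
  have hfreq : ∃ᶠ z in nhdsWithin (0 : ℂ) {(0 : ℂ)}ᶜ,
      (fun z => ∫ ω, Complex.exp (z * X ω) ∂μ) z = (fun z => ∫ ω, Complex.exp (z * Y ω) ∂μ) z := by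
    have htend : Tendsto (fun n : ℕ => ((ε / 2 / (n + 1) : ℝ) : ℂ)) atTop
        (nhdsWithin (0 : ℂ) {(0 : ℂ)}ᶜ) := by
      apply tendsto_nhdsWithin_of_tendsto_nhds_of_eventually_within
      · have hr : Tendsto (fun n : ℕ => (ε / 2 / (n + 1) : ℝ)) atTop (nhds 0) := by
          apply Tendsto.div_atTop (tendsto_const_nhds)
          exact tendsto_atTop_add_const_right _ _ tendsto_natCast_atTop_atTop
        have h0 := (Complex.continuous_ofReal.tendsto 0).comp hr
        rw [Complex.ofReal_zero] at h0
        exact h0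
      · filter_upwards with n
        simp only [mem_compl_iff, mem_singleton_iff, Complex.ofReal_eq_zero]
        positivity
    apply htend.frequently
    apply Filter.Frequently.of_forall
    intro n
    apply hreal
    rw [abs_of_pos (by positivity)]
    have h2 : ε / 2 / ((n : ℝ) + 1) ≤ ε / 2 :=
      div_le_self (by positivity) (by linarith [Nat.cast_nonneg (α := ℝ) n])
    linarith
  have heq := hAX.eqOn_of_preconnected_of_frequently_eq hAY hconn
    (show (0 : ℂ) ∈ S by simp [hS, hε]) hfreq
  have hz : (Complex.I * (y : ℂ)) ∈ S := by simp [hS, hε]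
  have := heq hz
  simpa only [mul_assoc] using this

/-- Part C: equal characteristic functions give equal integrals of Schwartz functions. -/
lemma aux_schwartz_eq {X Y : Ω → ℝ} (hX : Measurable X) (hY : Measurable Y)
    (hchar : ∀ y : ℝ, ∫ ω, Complex.exp (Complex.I * y * X ω) ∂μ
      = ∫ ω, Complex.exp (Complex.I * y * Y ω) ∂μ)
    (f : SchwartzMap ℝ ℂ) :
    ∫ ω, f (X ω) ∂μ = ∫ ω, f (Y ω) ∂μ := by
  set g := (SchwartzMap.fourierTransformCLE ℂ (SchwartzMap ℝ ℂ) (F := SchwartzMap ℝ ℂ)).symm f with hg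
  have hginv : ∀ x : ℝ, f x = ∫ w : ℝ, Real.fourierChar (-(w * x)) • (g w : ℂ) := by
    intro x
    have h1 : ⇑((SchwartzMap.fourierTransformCLE ℂ (SchwartzMap ℝ ℂ) (F := SchwartzMap ℝ ℂ)) g) = 𝓕 (⇑g : ℝ → ℂ) :=
      SchwartzMap.fourier_coe g
    have h2 : (SchwartzMap.fourierTransformCLE ℂ (SchwartzMap ℝ ℂ) (F := SchwartzMap ℝ ℂ)) g = f := by
      rw [hg]; exact (SchwartzMap.fourierTransformCLE ℂ (SchwartzMap ℝ ℂ) (F := SchwartzMap ℝ ℂ)).apply_symm_apply f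
    have := congrFun (h2 ▸ h1) x
    rw [this, Real.fourier_real_eq]
  have key : ∀ (Z : Ω → ℝ), Measurable Z →
      ∫ ω, f (Z ω) ∂μ = ∫ w : ℝ, (g w : ℂ) * ∫ ω, Complex.exp (Complex.I * (-(2 * π * w)) * Z ω) ∂μ := by
    intro Z hZ
    have hint : Integrable (Function.uncurry fun ω w =>
        Real.fourierChar (-(w * Z ω)) • (g w : ℂ)) (μ.prod volume) := by
      have hb : Integrable (fun p : Ω × ℝ => (1 : ℝ) * ‖g p.2‖) (μ.prod volume) :=
        Integrable.mul_prod (integrable_const 1) g.integrable.norm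
      refine hb.mono' ?_ ?_
      · -- measurability
        have hφ : Continuous (fun q : ℝ × ℝ => Real.fourierChar (-(q.2 * q.1)) • (g q.2 : ℂ)) := by
          apply Continuous.smul
          · exact continuous_subtype_val.comp (Real.continuous_fourierChar.comp (continuous_snd.mul continuous_fst).neg)
          · exact g.continuous.comp continuous_snd
        have hm : Measurable (fun p : Ω × ℝ => (Z p.1, p.2)) :=
          (hZ.comp measurable_fst).prodMk measurable_snd
        exact (hφ.measurable.comp hm).aestronglyMeasurable
      · filter_upwards with p
        simp [Function.uncurry, norm_smul]
    calc ∫ ω, f (Z ω) ∂μ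
        = ∫ ω, ∫ w : ℝ, Real.fourierChar (-(w * Z ω)) • (g w : ℂ) ∂volume ∂μ := by
          congr 1; ext ω; exact hginv (Z ω)
      _ = ∫ w : ℝ, ∫ ω, Real.fourierChar (-(w * Z ω)) • (g w : ℂ) ∂μ ∂volume :=
          integral_integral_swap hint
      _ = ∫ w : ℝ, (g w : ℂ) * ∫ ω, Complex.exp (Complex.I * (-(2 * π * w)) * Z ω) ∂μ ∂volume := by
          congr 1; ext w
          have e1 : ∀ ω : Ω, (Real.fourierChar (-(w * Z ω)) • (g w : ℂ))
              = Complex.exp (Complex.I * (-(2 * π * w)) * Z ω) * g w := by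
            intro ω
            rw [Circle.smul_def, Real.fourierChar_apply]
            congr 2
            push_cast
            ring
          simp_rw [e1]
          rw [integral_mul_const]
          ring
    done
  rw [key X hX, key Y hY]
  congr 1; ext w
  have h := hchar (-(2 * π * w))
  push_cast at h ⊢
  rw [h]

/-- A smooth compactly supported real function, complexified, as a Schwartz map. -/
noncomputable def bumpToSchwartz (g : ℝ → ℝ) (hg : ContDiff ℝ ((⊤ : ℕ∞) : WithTop ℕ∞) g)
    (hsupp : HasCompactSupport g) : SchwartzMap ℝ ℂ where
  toFun := fun x => (g x : ℂ)
  smooth' := Complex.ofRealCLM.contDiff.comp hg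
  decay' := by
    intro k n
    have hsm : ContDiff ℝ ((⊤ : ℕ∞) : WithTop ℕ∞) (fun x => (g x : ℂ)) := Complex.ofRealCLM.contDiff.comp hg
    have hsupp2 : HasCompactSupport (fun x => (g x : ℂ)) :=
      hsupp.comp_left (g := fun r : ℝ => (r : ℂ)) Complex.ofReal_zero
    have hsupp3 : HasCompactSupport
        (fun x : ℝ => ‖x‖ ^ k * ‖iteratedFDeriv ℝ n (fun y => (g y : ℂ)) x‖) := by
      have h4 : HasCompactSupport (fun x : ℝ => ‖iteratedFDeriv ℝ n (fun y => (g y : ℂ)) x‖) :=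
        (hsupp2.iteratedFDeriv n).norm
      exact h4.mul_left
    have hcont : Continuous
        (fun x : ℝ => ‖x‖ ^ k * ‖iteratedFDeriv ℝ n (fun y => (g y : ℂ)) x‖) := by
      apply Continuous.mul
      · exact (continuous_norm).pow k
      · exact (hsm.continuous_iteratedFDeriv (by exact_mod_cast le_top)).norm
    obtain ⟨C, hC⟩ := hcont.bounded_above_of_compact_support hsupp3
    refine ⟨C, fun x => ?_⟩
    have := hC x
    rw [Real.norm_eq_abs] at this
    exact (le_abs_self _).trans this

@[simp] lemma bumpToSchwartz_apply (g : ℝ → ℝ) (hg : ContDiff ℝ ((⊤ : ℕ∞) : WithTop ℕ∞) g)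
    (hsupp : HasCompactSupport g) (x : ℝ) : bumpToSchwartz g hg hsupp x = (g x : ℂ) := rfl

/-- From equal integrals of Schwartz functions, equal integrals of bump functions. -/
lemma aux_bump_eq {ν₁ ν₂ : Measure ℝ} [IsProbabilityMeasure ν₁] [IsProbabilityMeasure ν₂]
    (hSch : ∀ f : SchwartzMap ℝ ℂ, ∫ x, f x ∂ν₁ = ∫ x, f x ∂ν₂)
    (c : ℝ) (f : ContDiffBump c) : ∫ x, f x ∂ν₁ = ∫ x, f x ∂ν₂ := by
  have hint1 : Integrable (⇑f) ν₁ := f.continuous.integrable_of_hasCompactSupport f.hasCompactSupport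
  have hint2 : Integrable (⇑f) ν₂ := f.continuous.integrable_of_hasCompactSupport f.hasCompactSupport
  have h := hSch (bumpToSchwartz f (f.contDiff (n := ⊤)) f.hasCompactSupport)
  simp only [bumpToSchwartz_apply] at h
  have A := Complex.ofRealCLM.integral_comp_comm hint1
  have B := Complex.ofRealCLM.integral_comp_comm hint2
  simp only [Complex.ofRealCLM_apply] at A B
  rw [A, B] at h
  exact_mod_cast h

/-- Equality on closed balls. -/
lemma aux_closedBall_eq {ν₁ ν₂ : Measure ℝ} [IsProbabilityMeasure ν₁] [IsProbabilityMeasure ν₂]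
    (hb : ∀ (c : ℝ) (f : ContDiffBump c), ∫ x, f x ∂ν₁ = ∫ x, f x ∂ν₂)
    (c r : ℝ) (hr : 0 ≤ r) :
    ν₁ (Metric.closedBall c r) = ν₂ (Metric.closedBall c r) := by
  -- the bump functions
  have hlt : ∀ n : ℕ, r + ((n : ℝ) + 1)⁻¹ < r + 2 * ((n : ℝ) + 1)⁻¹ := by
    intro n
    have : (0:ℝ) < ((n : ℝ) + 1)⁻¹ := by positivity
    linarith
  set F : ℕ → ContDiffBump c := fun n =>
    ⟨r + ((n : ℝ) + 1)⁻¹, r + 2 * ((n : ℝ) + 1)⁻¹, by positivity, hlt n⟩ with hF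
  set a : ℕ → ℝ := fun n => ∫ x, F n x ∂ν₁ with ha
  have hsqueeze : ∀ (ν : Measure ℝ) (_ : IsProbabilityMeasure ν),
      Tendsto (fun n => ∫ x, F n x ∂ν) atTop (nhds (ν (Metric.closedBall c r)).toReal) := by
    intro ν hν
    have hintF : ∀ n, Integrable (⇑(F n)) ν := fun n =>
      (F n).continuous.integrable_of_hasCompactSupport (F n).hasCompactSupport
    have hlow : ∀ n, (ν (Metric.closedBall c r)).toReal ≤ ∫ x, F n x ∂ν := by
      intro n
      have hind : ∫ x, (Metric.closedBall c r).indicator (fun _ => (1:ℝ)) x ∂ν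
          = (ν (Metric.closedBall c r)).toReal := by
        rw [integral_indicator_const (1:ℝ) Metric.isClosed_closedBall.measurableSet]
        simp
        rfl
      rw [← hind]
      apply integral_mono ((integrable_const (1:ℝ)).indicator Metric.isClosed_closedBall.measurableSet)
        (hintF n)
      intro x
      by_cases hx : x ∈ Metric.closedBall c r
      · rw [indicator_of_mem hx]
        apply le_of_eq
        symm
        apply (F n).one_of_mem_closedBall
        apply Metric.closedBall_subset_closedBall _ hx
        simp only [hF]
        have : (0:ℝ) < ((n : ℝ) + 1)⁻¹ := by positivity
        linarith
      · rw [indicator_of_notMem hx]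
        exact (F n).nonneg
    have hup : ∀ n, ∫ x, F n x ∂ν ≤ (ν (Metric.closedBall c (r + 2 * ((n:ℝ) + 1)⁻¹))).toReal := by
      intro n
      have hind : ∫ x, (Metric.closedBall c (r + 2 * ((n:ℝ)+1)⁻¹)).indicator (fun _ => (1:ℝ)) x ∂ν
          = (ν (Metric.closedBall c (r + 2 * ((n:ℝ)+1)⁻¹))).toReal := by
        rw [integral_indicator_const (1:ℝ) Metric.isClosed_closedBall.measurableSet]
        simp
        rfl
      rw [← hind]
      apply integral_mono (hintF n)
        ((integrable_const (1:ℝ)).indicator Metric.isClosed_closedBall.measurableSet)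
      intro x
      by_cases hx : x ∈ Metric.closedBall c (r + 2 * ((n:ℝ)+1)⁻¹)
      · rw [indicator_of_mem hx]
        exact (F n).le_one
      · rw [indicator_of_notMem hx]
        have hxs : x ∉ Function.support (F n) := by
          rw [(F n).support_eq]
          intro hmem
          exact hx (Metric.ball_subset_closedBall hmem)
        rw [Function.notMem_support.mp hxs]
    have hconv : Tendsto (fun n : ℕ => (ν (Metric.closedBall c (r + 2 * ((n:ℝ)+1)⁻¹))).toReal)
        atTop (nhds (ν (Metric.closedBall c r)).toReal) := by
      have hinter : ⋂ n : ℕ, Metric.closedBall c (r + 2 * ((n:ℝ)+1)⁻¹) = Metric.closedBall c r := by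
        ext x
        simp only [mem_iInter, Metric.mem_closedBall]
        constructor
        · intro h
          by_contra hnot
          push_neg at hnot
          obtain ⟨n, hn⟩ := exists_nat_gt (2 / (dist x c - r))
          have hdpos : 0 < dist x c - r := by linarith
          have h2 : 2 / (dist x c - r) < (n:ℝ) + 1 := by
            have : (0:ℝ) ≤ n := Nat.cast_nonneg n
            linarith
          have h3 : 2 * ((n:ℝ)+1)⁻¹ < dist x c - r := by
            rw [div_lt_iff₀ hdpos] at h2
            have hn1 : (0:ℝ) < (n:ℝ) + 1 := by positivity
            rw [mul_comm] at h2
            calc 2 * ((n:ℝ)+1)⁻¹ < (dist x c - r) * ((n:ℝ)+1) * ((n:ℝ)+1)⁻¹ := by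
                  apply mul_lt_mul_of_pos_right h2 (by positivity)
              _ = dist x c - r := by field_simp
          linarith [h n]
        · intro h n
          have : (0:ℝ) ≤ 2 * ((n:ℝ)+1)⁻¹ := by positivity
          linarith
      have htend := tendsto_measure_iInter_atTop
        (μ := ν) (s := fun n : ℕ => Metric.closedBall c (r + 2 * ((n:ℝ)+1)⁻¹))
        (fun n => Metric.isClosed_closedBall.measurableSet.nullMeasurableSet)
        (fun m n hmn => by
          apply Metric.closedBall_subset_closedBall
          have h2 : ((n:ℝ)+1)⁻¹ ≤ ((m:ℝ)+1)⁻¹ := by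
            apply inv_anti₀ (by positivity)
            have := (Nat.cast_le (α := ℝ)).2 hmn
            linarith
          linarith)
        ⟨0, measure_ne_top ν _⟩
      rw [hinter] at htend
      have := (ENNReal.tendsto_toReal (measure_ne_top ν _)).comp htend
      exact this
    exact tendsto_of_tendsto_of_tendsto_of_le_of_le tendsto_const_nhds hconv hlow hup
  have h1 := hsqueeze ν₁ inferInstance
  have h2 := hsqueeze ν₂ inferInstance
  have heq : (fun n => ∫ x, F n x ∂ν₁) = fun n => ∫ x, F n x ∂ν₂ := by
    ext n; exact hb c (F n)
  rw [heq] at h1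
  have := tendsto_nhds_unique h1 h2
  exact (ENNReal.toReal_eq_toReal_iff' (measure_ne_top ν₁ _) (measure_ne_top ν₂ _)).mp this

lemma aux_measure_eq {ν₁ ν₂ : Measure ℝ} [IsProbabilityMeasure ν₁] [IsProbabilityMeasure ν₂]
    (hcb : ∀ (c r : ℝ), 0 ≤ r → ν₁ (Metric.closedBall c r) = ν₂ (Metric.closedBall c r)) :
    ν₁ = ν₂ := by
  apply Measure.ext_of_Iic
  intro a
  have hunion : ⋃ n : ℕ, Metric.closedBall (a - n) n = Iic a := by
    ext x
    simp only [mem_iUnion, Metric.mem_closedBall, Real.dist_eq, mem_Iic]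
    constructor
    · rintro ⟨n, hn⟩
      rcases abs_le.mp hn with ⟨_, h2⟩
      linarith
    · intro hx
      obtain ⟨n, hn⟩ := exists_nat_gt (a - x)
      refine ⟨n, abs_le.mpr ⟨by linarith, by linarith⟩⟩
  have hmono : Monotone (fun n : ℕ => Metric.closedBall (a - n) (n : ℝ)) := by
    intro m n hmn
    intro x hx
    simp only [Metric.mem_closedBall, Real.dist_eq] at hx ⊢
    rcases abs_le.mp hx with ⟨h1, h2⟩
    have hc := (Nat.cast_le (α := ℝ)).2 hmn
    apply abs_le.mpr
    constructor <;> linarith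
  have t1 := tendsto_measure_iUnion_atTop (μ := ν₁) hmono
  have t2 := tendsto_measure_iUnion_atTop (μ := ν₂) hmono
  rw [hunion] at t1 t2
  have heq : (⇑ν₁ ∘ fun n : ℕ => Metric.closedBall (a - n) (n : ℝ))
      = (⇑ν₂ ∘ fun n : ℕ => Metric.closedBall (a - n) (n : ℝ)) := by
    ext n
    exact hcb (a - n) n (Nat.cast_nonneg n)
  rw [heq] at t1
  exact tendsto_nhds_unique t1 t2

end Aux

/-- If two real-valued random variables have MGFs finite on an open interval around 0
and all moments agree, then they have the same distribution. -/
theorem moments_determine_distribution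
    {Ω : Type*} [MeasurableSpace Ω] (μ : Measure Ω) [IsProbabilityMeasure μ]
    (X Y : Ω → ℝ) (hX : Measurable X) (hY : Measurable Y)
    (ε : ℝ) (hε : 0 < ε)
    (hmgfX : ∀ t : ℝ, |t| < ε → Integrable (fun ω => Real.exp (t * X ω)) μ)
    (hmgfY : ∀ t : ℝ, |t| < ε → Integrable (fun ω => Real.exp (t * Y ω)) μ)
    (hmom : ∀ n : ℕ, ∫ ω, X ω ^ n ∂μ = ∫ ω, Y ω ^ n ∂μ) :
    μ.map X = μ.map Y := by
  have hchar : ∀ y : ℝ, ∫ ω, Complex.exp (Complex.I * y * X ω) ∂μ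
      = ∫ ω, Complex.exp (Complex.I * y * Y ω) ∂μ :=
    fun y => aux_charfun_eq hX hY hε hmgfX hmgfY hmom y
  have hSchΩ := aux_schwartz_eq hX hY hchar
  haveI h₁ : IsProbabilityMeasure (μ.map X) := Measure.isProbabilityMeasure_map hX.aemeasurable
  haveI h₂ : IsProbabilityMeasure (μ.map Y) := Measure.isProbabilityMeasure_map hY.aemeasurable
  have hSch : ∀ f : SchwartzMap ℝ ℂ, ∫ x, f x ∂(μ.map X) = ∫ x, f x ∂(μ.map Y) := by
    intro f
    rw [integral_map hX.aemeasurable f.continuous.aestronglyMeasurable,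
        integral_map hY.aemeasurable f.continuous.aestronglyMeasurable]
    exact hSchΩ f
  exact aux_measure_eq
    (fun c r hr => aux_closedBall_eq (fun c' f => aux_bump_eq hSch c' f) c r hr)
end

section
/- For probability measures μ and ν on ℝ with finite p-th moments (p ≥ 1), the p-th Wasserstein distance satisfies W_p^p(μ, ν) = ∫_0^1 |F_μ^{-1}(z) − F_ν^{-1}(z)|^p dz, where F_μ^{-1} and F_ν^{-1} are the quantile functions (generalized inverse CDFs) of μ and ν. -/
open MeasureTheory

/-- The p-th power of the p-th Wasserstein distance, defined as the infimum of transport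
costs over all couplings. -/
noncomputable def WpPow {X : Type*} [MeasurableSpace X] [PseudoMetricSpace X]
    (p : ℝ) (μ ν : Measure X) : ℝ :=
  sInf {c : ℝ | ∃ π : Measure (X × X), π.map Prod.fst = μ ∧ π.map Prod.snd = ν ∧
    c = ∫ z, dist z.1 z.2 ^ p ∂π}

/-- The quantile function (generalized inverse CDF) of a measure on ℝ. -/
noncomputable def quantile (μ : Measure ℝ) (z : ℝ) : ℝ :=
  sInf {x : ℝ | z ≤ ProbabilityTheory.cdf μ x}

namespace WQaux

open Set ProbabilityTheory Filter

variable (μ : Measure ℝ) [IsProbabilityMeasure μ]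

lemma quantile_le_iff {z x : ℝ} (h0 : 0 < z) (h1 : z < 1) :
    quantile μ z ≤ x ↔ z ≤ cdf μ x := by
  set S := {x : ℝ | z ≤ cdf μ x} with hS
  have hne : S.Nonempty := by
    obtain ⟨x, hx⟩ := ((tendsto_cdf_atTop μ).eventually (eventually_gt_nhds h1)).exists
    exact ⟨x, hx.le⟩
  have hbdd : BddBelow S := by
    obtain ⟨x₀, hx₀⟩ := ((tendsto_cdf_atBot μ).eventually (eventually_lt_nhds h0)).exists
    refine ⟨x₀, fun x hx => le_of_not_gt fun hlt => ?_⟩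
    exact absurd (hx.trans ((monotone_cdf μ) hlt.le)) (not_le.2 hx₀)
  constructor
  · intro hle
    have key : z ≤ cdf μ (sInf S) := by
      have h2 : ∀ t ∈ Ioi (sInf S), z ≤ cdf μ t := by
        intro t ht
        obtain ⟨u, huS, hut⟩ := exists_lt_of_csInf_lt hne ht
        exact huS.trans ((monotone_cdf μ) hut.le)
      have rc : Filter.Tendsto (cdf μ) (nhdsWithin (sInf S) (Ioi (sInf S)))
          (nhds (cdf μ (sInf S))) :=
        ((cdf μ).right_continuous (sInf S)).tendsto.mono_left
          (nhdsWithin_mono _ Ioi_subset_Ici_self)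
      exact ge_of_tendsto rc (eventually_nhdsWithin_of_forall h2)
    exact key.trans ((monotone_cdf μ) hle)
  · intro h
    exact csInf_le hbdd h

lemma quantile_mono_onIoo {z z' : ℝ} (h0 : 0 < z) (h1 : z' < 1) (hzz : z ≤ z') :
    quantile μ z ≤ quantile μ z' := by
  have h0' : 0 < z' := lt_of_lt_of_le h0 hzz
  have h1'' : z < 1 := lt_of_le_of_lt hzz h1
  have h2 : z' ≤ cdf μ (quantile μ z') := by
    rw [← quantile_le_iff μ h0' h1]
  exact (quantile_le_iff μ h0 h1'').2 (hzz.trans h2)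

/-- measurable modification of the quantile function -/
noncomputable def qh : ℝ → ℝ := (Ioo (0:ℝ) 1).piecewise (quantile μ) 0

lemma qh_eq {z : ℝ} (hz : z ∈ Ioo (0:ℝ) 1) : qh μ z = quantile μ z :=
  Set.piecewise_eq_of_mem _ _ _ hz

lemma qh_ae_eq : quantile μ =ᵐ[volume.restrict (Ioo (0:ℝ) 1)] qh μ :=
  ((ae_restrict_iff' measurableSet_Ioo).2 (ae_of_all _ fun z hz => (qh_eq μ hz).symm))

lemma measurable_qh : Measurable (qh μ) := by
  refine measurable_of_Iic fun c => ?_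
  by_cases hc : (0:ℝ) ≤ c
  · have : qh μ ⁻¹' Iic c = (Ioo 0 1 ∩ Iic (cdf μ c)) ∪ (Ioo (0:ℝ) 1)ᶜ := by
      ext z
      by_cases hz : z ∈ Ioo (0:ℝ) 1
      · simp [qh, Set.piecewise, hz, quantile_le_iff μ hz.1 hz.2]
      · simp [qh, Set.piecewise, hz, hc]
    rw [this]
    exact ((measurableSet_Ioo.inter measurableSet_Iic).union
      measurableSet_Ioo.compl)
  · have : qh μ ⁻¹' Iic c = Ioo 0 1 ∩ Iic (cdf μ c) := by
      ext z
      by_cases hz : z ∈ Ioo (0:ℝ) 1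
      · simp [qh, Set.piecewise, hz, quantile_le_iff μ hz.1 hz.2]
      · simp [qh, Set.piecewise, hz, hc]
    rw [this]
    exact measurableSet_Ioo.inter measurableSet_Iic

lemma vol_Ioo_inter_Iic {c : ℝ} (h0 : 0 ≤ c) (h1 : c ≤ 1) :
    volume (Ioo (0:ℝ) 1 ∩ Iic c) = ENNReal.ofReal c := by
  refine le_antisymm ?_ ?_
  · have : Ioo (0:ℝ) 1 ∩ Iic c ⊆ Ioc 0 c := fun z hz => ⟨hz.1.1, hz.2⟩
    calc volume (Ioo (0:ℝ) 1 ∩ Iic c) ≤ volume (Ioc (0:ℝ) c) := measure_mono this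
    _ = ENNReal.ofReal c := by simp
  · have : Ioo (0:ℝ) c ⊆ Ioo (0:ℝ) 1 ∩ Iic c := fun z hz =>
      ⟨⟨hz.1, lt_of_lt_of_le hz.2 h1⟩, hz.2.le⟩
    calc ENNReal.ofReal c = volume (Ioo (0:ℝ) c) := by simp
    _ ≤ _ := measure_mono this

lemma map_qh : (volume.restrict (Ioo (0:ℝ) 1)).map (qh μ) = μ := by
  haveI : IsProbabilityMeasure (volume.restrict (Ioo (0:ℝ) 1)) :=
    ⟨by simp [Real.volume_Ioo]⟩
  haveI : IsProbabilityMeasure ((volume.restrict (Ioo (0:ℝ) 1)).map (qh μ)) :=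
    Measure.isProbabilityMeasure_map (measurable_qh μ).aemeasurable
  refine Measure.ext_of_Iic _ _ fun a => ?_
  rw [Measure.map_apply (measurable_qh μ) measurableSet_Iic,
    Measure.restrict_apply (measurable_qh μ measurableSet_Iic)]
  have hset : qh μ ⁻¹' Iic a ∩ Ioo 0 1 = Ioo (0:ℝ) 1 ∩ Iic (cdf μ a) := by
    ext z
    constructor
    · rintro ⟨hz1, hz2⟩
      refine ⟨hz2, ?_⟩
      have := hz1
      rw [mem_preimage, mem_Iic, qh_eq μ hz2, quantile_le_iff μ hz2.1 hz2.2] at this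
      exact this
    · rintro ⟨hz2, hz1⟩
      refine ⟨?_, hz2⟩
      rw [mem_preimage, mem_Iic, qh_eq μ hz2, quantile_le_iff μ hz2.1 hz2.2]
      exact hz1
  rw [hset, vol_Ioo_inter_Iic (cdf_nonneg μ a) (cdf_le_one μ a), ofReal_cdf μ a]

section gsec

variable {p : ℝ}

/-- right-continuous derivative of `|x| ^ p` -/
noncomputable def g0 (p : ℝ) (r : ℝ) : ℝ :=
  if 0 ≤ r then p * r ^ (p - 1) else -(p * (-r) ^ (p - 1))

lemma g0_mono (hp : 1 ≤ p) : Monotone (g0 p) := by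
  have hp0 : (0:ℝ) ≤ p := by linarith
  have hp1 : (0:ℝ) ≤ p - 1 := by linarith
  intro a b hab
  rcases le_or_gt 0 a with ha | ha
  · have hb : 0 ≤ b := ha.trans hab
    simp only [g0, if_pos ha, if_pos hb]
    exact mul_le_mul_of_nonneg_left (Real.rpow_le_rpow ha hab hp1) hp0
  · rcases le_or_gt 0 b with hb | hb
    · simp only [g0, if_neg (not_le.2 ha), if_pos hb]
      have h1 : 0 ≤ p * b ^ (p - 1) := mul_nonneg hp0 (Real.rpow_nonneg hb _)
      have h2 : 0 ≤ p * (-a) ^ (p - 1) := mul_nonneg hp0 (Real.rpow_nonneg (by linarith) _)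
      linarith
    · simp only [g0, if_neg (not_le.2 ha), if_neg (not_le.2 hb)]
      have : (-b) ^ (p-1) ≤ (-a) ^ (p-1) :=
        Real.rpow_le_rpow (by linarith) (by linarith) hp1
      have := mul_le_mul_of_nonneg_left this hp0
      linarith

lemma g0_rc (hp : 1 ≤ p) : ∀ x, ContinuousWithinAt (g0 p) (Set.Ici x) x := by
  intro x
  rcases le_or_gt 0 x with hx | hx
  · have hcont : ContinuousWithinAt (fun r : ℝ => p * r ^ (p - 1)) (Set.Ici x) x :=
      (((Real.continuousAt_rpow_const x (p - 1)
        (Or.inr (by linarith))).const_smul p).continuousWithinAt)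
    refine hcont.congr (fun y hy => ?_) ?_
    · simp [g0, if_pos (hx.trans hy)]
    · simp [g0, if_pos hx]
  · have hcont : ContinuousAt (fun r : ℝ => -(p * (-r) ^ (p - 1))) x := by
      have h1 : ContinuousAt (fun r : ℝ => (-r) ^ (p - 1)) x := by
        have := (Real.continuousAt_rpow_const (-x) (p - 1) (Or.inl (by linarith)))
        exact this.comp (continuousAt_neg)
      exact ((h1.const_smul p).neg)
    have hev : ∀ᶠ y in nhds x, g0 p y = -(p * (-y) ^ (p - 1)) := by
      filter_upwards [Iio_mem_nhds hx] with y hy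
      simp [g0, if_neg (not_le.2 (Set.mem_Iio.1 hy))]
    exact (hcont.congr (Filter.EventuallyEq.symm hev)).continuousWithinAt

/-- the Stieltjes function version of g0 -/
noncomputable def gS (p : ℝ) (hp : 1 ≤ p) : StieltjesFunction ℝ :=
  ⟨g0 p, g0_mono hp, g0_rc hp⟩

lemma integral_pow_aux (hp : 1 ≤ p) (c : ℝ) :
    ∫ u in (0:ℝ)..c, p * u ^ (p - 1) = c ^ p := by
  have hpne : p ≠ 0 := by linarith
  rw [intervalIntegral.integral_const_mul, integral_rpow (Or.inl (by linarith)),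
    sub_add_cancel, Real.zero_rpow hpne]
  field_simp
  simp

lemma integral_g0 (hp : 1 ≤ p) (b : ℝ) :
    ∫ r in (0:ℝ)..b, g0 p r = |b| ^ p := by
  rcases le_or_gt 0 b with hb | hb
  · rw [abs_of_nonneg hb]
    have h1 : ∫ r in (0:ℝ)..b, g0 p r = ∫ r in (0:ℝ)..b, p * r ^ (p - 1) := by
      refine intervalIntegral.integral_congr fun r hr => ?_
      rw [Set.uIcc_of_le hb] at hr
      simp [g0, if_pos hr.1]
    rw [h1]; exact integral_pow_aux hp b
  · rw [abs_of_neg hb, intervalIntegral.integral_symm]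
    have h0 : ∀ᵐ r : ℝ, r ∈ Set.uIoc b 0 → g0 p r = -(p * (-r) ^ (p - 1)) := by
      have hne : ∀ᵐ r : ℝ, r ≠ (0:ℝ) := by
        rw [MeasureTheory.ae_iff]
        simpa using Real.volume_singleton
      filter_upwards [hne] with r hr hmem
      rw [Set.uIoc_of_le hb.le] at hmem
      have : r < 0 := lt_of_le_of_ne hmem.2 hr
      simp [g0, if_neg (not_le.2 this)]
    have h2 : ∫ r in b..(0:ℝ), g0 p r = ∫ r in b..(0:ℝ), -(p * (-r) ^ (p - 1)) :=
      intervalIntegral.integral_congr_ae h0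
    have h3 : (∫ r in b..(0:ℝ), -(p * (-r) ^ (p - 1)))
        = ∫ u in (0:ℝ)..(-b), -(p * u ^ (p - 1)) := by
      rw [intervalIntegral.integral_comp_neg (fun u : ℝ => -(p * u ^ (p - 1)))]
      norm_num
    rw [h2, h3, intervalIntegral.integral_neg, integral_pow_aux hp (-b),
      neg_neg]

lemma antitone_comp1 (hp : 1 ≤ p) (x : ℝ) : Antitone (fun w => g0 p (x - w)) :=
  fun a b h => g0_mono hp (by linarith : x - b ≤ x - a)

lemma antitone_comp2 (hp : 1 ≤ p) : Antitone (fun w : ℝ => g0 p (-w)) :=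
  fun a b h => g0_mono hp (by linarith : -b ≤ -a)

lemma key2 (hp : 1 ≤ p) (x y : ℝ) :
    |x - y| ^ p = |x| ^ p + |y| ^ p - ∫ w in (0:ℝ)..y, (g0 p (x - w) - g0 p (-w)) := by
  have hA : (∫ w in (0:ℝ)..y, g0 p (x - w)) = |x| ^ p - |x - y| ^ p := by
    rw [intervalIntegral.integral_comp_sub_left (g0 p) x, sub_zero]
    have h1 := intervalIntegral.integral_add_adjacent_intervals
      (a := (0:ℝ)) (b := x - y) (c := x) (μ := volume)
      ((g0_mono hp).intervalIntegrable) ((g0_mono hp).intervalIntegrable)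
    have h2 := integral_g0 hp (x - y)
    have h3 := integral_g0 hp x
    linarith
  have hB : (∫ w in (0:ℝ)..y, g0 p (-w)) = -(|y| ^ p) := by
    rw [intervalIntegral.integral_comp_neg (g0 p), neg_zero, intervalIntegral.integral_symm,
      integral_g0 hp (-y), abs_neg]
  rw [intervalIntegral.integral_sub ((antitone_comp1 hp x).intervalIntegrable)
    ((antitone_comp2 hp).intervalIntegrable), hA, hB]
  ring

/-- `θf y w = 1_{w ≤ y} - 1_{w ≤ 0}` -/
noncomputable def θf (y w : ℝ) : ℝ := (if w ≤ y then 1 else 0) - (if w ≤ 0 then 1 else 0)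

/-- `ηf x v w = 1_{v + w ≤ x} - 1_{v + w ≤ 0}` -/
noncomputable def ηf (x v w : ℝ) : ℝ :=
  (if v + w ≤ x then 1 else 0) - (if v + w ≤ 0 then 1 else 0)

lemma θf_abs_le (y w : ℝ) : |θf y w| ≤ 1 := by
  unfold θf; split_ifs <;> norm_num

lemma ηf_abs_le (x v w : ℝ) : |ηf x v w| ≤ 1 := by
  unfold ηf; split_ifs <;> norm_num

lemma θf_ne_zero {y w : ℝ} (h : θf y w ≠ 0) : w ∈ Set.uIoc 0 y := by
  rw [Set.mem_uIoc]
  rcases le_or_gt w y with h1 | h1 <;> rcases le_or_gt w 0 with h2 | h2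
  · simp [θf, h1, h2] at h
  · exact Or.inl ⟨h2, h1⟩
  · exact Or.inr ⟨h1, h2⟩
  · simp [θf, not_le.2 h1, not_le.2 h2] at h

lemma ηf_ne_zero {x v w : ℝ} (h : ηf x v w ≠ 0) : v + w ∈ Set.uIoc 0 x := by
  rw [Set.mem_uIoc]
  rcases le_or_gt (v + w) x with h1 | h1 <;> rcases le_or_gt (v + w) 0 with h2 | h2
  · simp [ηf, h1, h2] at h
  · exact Or.inl ⟨h2, h1⟩
  · exact Or.inr ⟨h1, h2⟩
  · simp [ηf, not_le.2 h1, not_le.2 h2] at h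

lemma abs_le_of_mem_uIoc {a b : ℝ} (h : a ∈ Set.uIoc 0 b) : |a| ≤ |b| := by
  rw [Set.mem_uIoc] at h
  rcases h with ⟨h1, h2⟩ | ⟨h1, h2⟩
  · rw [abs_of_pos h1]; exact h2.trans (le_abs_self b)
  · rw [abs_of_nonpos h2]
    calc -a ≤ -b := by linarith
    _ ≤ |b| := neg_le_abs b

lemma gS_apply (hp : 1 ≤ p) (r : ℝ) : (gS p hp) r = g0 p r := rfl

/-- C4: the inner integral over `γ` of `ηf` -/
lemma integral_ηf (hp : 1 ≤ p) (x w : ℝ) :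
    ∫ v, ηf x v w ∂(gS p hp).measure = g0 p (x - w) - g0 p (-w) := by
  rcases le_or_gt 0 x with hx | hx
  · have hfun : (fun v => ηf x v w) = (Set.Ioc (-w) (x - w)).indicator (fun _ => (1:ℝ)) := by
      funext v
      simp only [Set.indicator_apply, Set.mem_Ioc]
      unfold ηf
      rcases le_or_gt (v + w) x with h1 | h1 <;> rcases le_or_gt (v + w) 0 with h2 | h2
      · rw [if_pos h1, if_pos h2, if_neg (by rintro ⟨a, b⟩; linarith)]; norm_num
      · rw [if_pos h1, if_neg (not_le.2 h2), if_pos ⟨by linarith, by linarith⟩]; norm_num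
      · exact absurd (h2.trans hx) (not_le.2 h1)
      · rw [if_neg (not_le.2 h1), if_neg (not_le.2 h2),
          if_neg (by rintro ⟨a, b⟩; linarith)]; norm_num
    rw [hfun, MeasureTheory.integral_indicator_const _ measurableSet_Ioc, measureReal_def,
      StieltjesFunction.measure_Ioc]
    have h5 : g0 p (-w) ≤ g0 p (x - w) := g0_mono hp (by linarith)
    simp only [smul_eq_mul, mul_one, gS_apply]
    exact ENNReal.toReal_ofReal (by linarith)
  · have hfun : (fun v => ηf x v w) = fun v =>
        -((Set.Ioc (x - w) (-w)).indicator (fun _ => (1:ℝ)) v) := by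
      funext v
      simp only [Set.indicator_apply, Set.mem_Ioc]
      unfold ηf
      rcases le_or_gt (v + w) x with h1 | h1 <;> rcases le_or_gt (v + w) 0 with h2 | h2
      · rw [if_pos h1, if_pos h2, if_neg (by rintro ⟨a, b⟩; linarith)]; norm_num
      · exact absurd (h1.trans hx.le) (not_le.2 h2)
      · rw [if_neg (not_le.2 h1), if_pos h2, if_pos ⟨by linarith, by linarith⟩]; norm_num
      · rw [if_neg (not_le.2 h1), if_neg (not_le.2 h2),
          if_neg (by rintro ⟨a, b⟩; linarith)]; norm_num
    rw [hfun, MeasureTheory.integral_neg, MeasureTheory.integral_indicator_const _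
      measurableSet_Ioc, measureReal_def, StieltjesFunction.measure_Ioc]
    have h5 : g0 p (x - w) ≤ g0 p (-w) := g0_mono hp (by linarith)
    simp only [smul_eq_mul, mul_one, gS_apply]
    rw [ENNReal.toReal_ofReal (by linarith)]
    ring

lemma measurable_θη (x y : ℝ) :
    Measurable (fun z : ℝ × ℝ => θf y z.1 * ηf x z.2 z.1) := by
  have h1 : Measurable fun z : ℝ × ℝ => θf y z.1 := by
    unfold θf
    exact (Measurable.ite (measurableSet_le measurable_fst measurable_const)
      measurable_const measurable_const).sub
      (Measurable.ite (measurableSet_le measurable_fst measurable_const)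
      measurable_const measurable_const)
  have h2 : Measurable fun z : ℝ × ℝ => ηf x z.2 z.1 := by
    unfold ηf
    exact (Measurable.ite (measurableSet_le (measurable_snd.add measurable_fst)
      measurable_const) measurable_const measurable_const).sub
      (Measurable.ite (measurableSet_le (measurable_snd.add measurable_fst)
      measurable_const) measurable_const measurable_const)
  exact h1.mul h2

/-- bounding box for the support of `θf * ηf` -/
def Dset (x y : ℝ) : Set (ℝ × ℝ) :=
  Set.uIoc 0 y ×ˢ Set.Icc (-(|x| + |y|)) (|x| + |y|)

lemma measurableSet_Dset (x y : ℝ) : MeasurableSet (Dset x y) :=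
  measurableSet_uIoc.prod measurableSet_Icc

lemma measure_Dset_lt_top (hp : 1 ≤ p) (x y : ℝ) :
    ((volume : Measure ℝ).prod (gS p hp).measure) (Dset x y) < ⊤ := by
  rw [Dset, Measure.prod_prod]
  exact ENNReal.mul_lt_top
    (by rw [Set.uIoc, Real.volume_Ioc]; exact ENNReal.ofReal_lt_top)
    (isCompact_Icc.measure_lt_top)

lemma Φ_bound (x y : ℝ) (z : ℝ × ℝ) :
    |θf y z.1 * ηf x z.2 z.1| ≤ (Dset x y).indicator (fun _ => (1:ℝ)) z := by
  by_cases hθ : θf y z.1 = 0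
  · rw [hθ, zero_mul, abs_zero]
    exact Set.indicator_nonneg (fun _ _ => zero_le_one) z
  by_cases hη : ηf x z.2 z.1 = 0
  · rw [hη, mul_zero, abs_zero]
    exact Set.indicator_nonneg (fun _ _ => zero_le_one) z
  have hz : z ∈ Dset x y := by
    refine ⟨θf_ne_zero hθ, ?_⟩
    have h1 : |z.2 + z.1| ≤ |x| := abs_le_of_mem_uIoc (ηf_ne_zero hη)
    have h2 : |z.1| ≤ |y| := abs_le_of_mem_uIoc (θf_ne_zero hθ)
    rw [Set.mem_Icc]
    constructor
    · have := (abs_le.1 h1).1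
      have := (abs_le.1 h2).2
      linarith [(abs_le.1 h2).1, (abs_le.1 h1).1]
    · linarith [(abs_le.1 h2).1, (abs_le.1 h1).2]
  rw [Set.indicator_of_mem hz, abs_mul]
  calc |θf y z.1| * |ηf x z.2 z.1| ≤ 1 * 1 :=
    mul_le_mul (θf_abs_le y z.1) (ηf_abs_le x z.2 z.1) (abs_nonneg _) zero_le_one
  _ = 1 := one_mul 1

lemma integrable_Dset_indicator (hp : 1 ≤ p) (x y : ℝ) :
    Integrable ((Dset x y).indicator (fun _ => (1:ℝ)))
      ((volume : Measure ℝ).prod (gS p hp).measure) := by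
  rw [integrable_indicator_iff (measurableSet_Dset x y)]
  exact integrableOn_const (measure_Dset_lt_top hp x y).ne

lemma integrable_Φ (hp : 1 ≤ p) (x y : ℝ) :
    Integrable (fun z : ℝ × ℝ => θf y z.1 * ηf x z.2 z.1)
      ((volume : Measure ℝ).prod (gS p hp).measure) :=
  Integrable.mono' (integrable_Dset_indicator hp x y)
    (measurable_θη x y).aestronglyMeasurable
    (ae_of_all _ fun z => by rw [Real.norm_eq_abs]; exact Φ_bound x y z)

lemma integral_θf_mul {y : ℝ} (ψ : ℝ → ℝ) (hψ : IntervalIntegrable ψ volume 0 y) :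
    ∫ w, θf y w * ψ w = ∫ w in (0:ℝ)..y, ψ w := by
  rcases le_or_gt 0 y with hy | hy
  · have hfun : (fun w => θf y w * ψ w) = (Set.Ioc 0 y).indicator ψ := by
      funext w
      simp only [Set.indicator_apply, Set.mem_Ioc]
      rcases le_or_gt w 0 with h2 | h2
      · rw [if_neg (by rintro ⟨a, b⟩; linarith)]
        simp [θf, h2, h2.trans hy]
      · rcases le_or_gt w y with h1 | h1
        · rw [if_pos ⟨h2, h1⟩]
          simp [θf, h1, not_le.2 h2]
        · rw [if_neg (by rintro ⟨a, b⟩; linarith)]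
          simp [θf, not_le.2 h1, not_le.2 h2]
    rw [hfun, MeasureTheory.integral_indicator measurableSet_Ioc,
      intervalIntegral.integral_of_le hy]
  · have hfun : (fun w => θf y w * ψ w) = fun w => -((Set.Ioc y 0).indicator ψ w) := by
      funext w
      simp only [Set.indicator_apply, Set.mem_Ioc]
      rcases le_or_gt w y with h1 | h1
      · rw [if_neg (by rintro ⟨a, b⟩; linarith)]
        simp [θf, h1, h1.trans hy.le]
      · rcases le_or_gt w 0 with h2 | h2
        · rw [if_pos ⟨h1, h2⟩]
          simp [θf, not_le.2 h1, h2]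
        · rw [if_neg (by rintro ⟨a, b⟩; linarith)]
          simp [θf, not_le.2 h1, not_le.2 h2, not_le.2 (hy.trans h2)]
    rw [hfun, MeasureTheory.integral_neg, MeasureTheory.integral_indicator measurableSet_Ioc,
      ← intervalIntegral.integral_of_le hy.le, ← intervalIntegral.integral_symm]

/-- C5: pointwise cost identity through the product measure -/
lemma claim3 (hp : 1 ≤ p) (x y : ℝ) :
    |x - y| ^ p = |x| ^ p + |y| ^ p -
      ∫ z : ℝ × ℝ, θf y z.1 * ηf x z.2 z.1
        ∂((volume : Measure ℝ).prod (gS p hp).measure) := by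
  rw [key2 hp x y]
  congr 1
  rw [MeasureTheory.integral_prod _ (integrable_Φ hp x y)]
  have h1 : ∀ w, (∫ v, θf y w * ηf x v w ∂(gS p hp).measure)
      = θf y w * (g0 p (x - w) - g0 p (-w)) := fun w => by
    rw [MeasureTheory.integral_const_mul, integral_ηf hp x w]
  simp_rw [h1]
  rw [integral_θf_mul _ ((antitone_comp1 hp x).intervalIntegrable.sub
    (antitone_comp2 hp).intervalIntegrable)]

end gsec

section coupling

variable {μ ν : Measure ℝ} [IsProbabilityMeasure μ] [IsProbabilityMeasure ν]
variable {π : Measure (ℝ × ℝ)}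

lemma integrable_indicator_one {s : Set (ℝ × ℝ)} (hs : MeasurableSet s)
    [IsFiniteMeasure π] :
    Integrable (s.indicator (fun _ => (1:ℝ))) π := by
  rw [integrable_indicator_iff hs]
  exact integrableOn_const (measure_lt_top π s).ne

lemma inner_expand [IsProbabilityMeasure π]
    (hfst : π.map Prod.fst = μ) (hsnd : π.map Prod.snd = ν) (w v : ℝ) :
    ∫ z : ℝ × ℝ, θf z.2 w * ηf z.1 v w ∂π
      = (π (Set.Iio (v + w) ×ˢ Set.Iio w)).toReal
        - (if 0 < w then 1 else 0) * (μ (Set.Iio (v + w))).toReal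
        - (if 0 < v + w then 1 else 0) * (ν (Set.Iio w)).toReal
        + (if 0 < v + w then 1 else 0) * (if 0 < w then 1 else 0) := by
  have hpt : ∀ z : ℝ × ℝ, θf z.2 w * ηf z.1 v w =
      (Set.Iio (v + w) ×ˢ Set.Iio w).indicator (fun _ => (1:ℝ)) z
      - (if 0 < w then 1 else 0) * (Set.Iio (v + w) ×ˢ (Set.univ : Set ℝ)).indicator
          (fun _ => (1:ℝ)) z
      - (if 0 < v + w then 1 else 0) * ((Set.univ : Set ℝ) ×ˢ Set.Iio w).indicator
          (fun _ => (1:ℝ)) z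
      + (if 0 < v + w then 1 else 0) * (if 0 < w then 1 else 0) := by
    intro z
    by_cases h1 : v + w ≤ z.1 <;> by_cases h2 : w ≤ z.2 <;>
      by_cases h3 : v + w ≤ 0 <;> by_cases h4 : w ≤ 0 <;>
      simp [θf, ηf, Set.indicator_apply, Set.mem_Iio, ← not_le, h1, h2, h3, h4] <;> ring
  rw [funext hpt]
  have i1 := integrable_indicator_one (π := π) (s := Set.Iio (v + w) ×ˢ Set.Iio w)
    ((measurableSet_Iio.prod measurableSet_Iio))
  have i2 := integrable_indicator_one (π := π) (s := Set.Iio (v + w) ×ˢ (Set.univ : Set ℝ))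
    ((measurableSet_Iio.prod MeasurableSet.univ))
  have i3 := integrable_indicator_one (π := π) (s := (Set.univ : Set ℝ) ×ˢ Set.Iio w)
    ((MeasurableSet.univ.prod measurableSet_Iio))
  have j2 : Integrable (fun z : ℝ × ℝ =>
      (Set.Iio (v + w) ×ˢ Set.Iio w).indicator (fun _ => (1:ℝ)) z
      - (if 0 < w then 1 else 0) * (Set.Iio (v + w) ×ˢ (Set.univ : Set ℝ)).indicator
          (fun _ => (1:ℝ)) z) π := i1.sub (i2.const_mul _)
  have j1 : Integrable (fun z : ℝ × ℝ =>
      (Set.Iio (v + w) ×ˢ Set.Iio w).indicator (fun _ => (1:ℝ)) z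
      - (if 0 < w then 1 else 0) * (Set.Iio (v + w) ×ˢ (Set.univ : Set ℝ)).indicator
          (fun _ => (1:ℝ)) z
      - (if 0 < v + w then 1 else 0) * ((Set.univ : Set ℝ) ×ˢ Set.Iio w).indicator
          (fun _ => (1:ℝ)) z) π := j2.sub (i3.const_mul _)
  rw [integral_add j1 (integrable_const _),
    integral_sub j2 (i3.const_mul _),
    integral_sub i1 (i2.const_mul _), MeasureTheory.integral_const_mul, MeasureTheory.integral_const_mul,
    integral_indicator_const _ (measurableSet_Iio.prod measurableSet_Iio),
    integral_indicator_const _ (measurableSet_Iio.prod MeasurableSet.univ),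
    integral_indicator_const _ (MeasurableSet.univ.prod measurableSet_Iio),
    integral_const]
  have hμ' : π (Set.Iio (v + w) ×ˢ (Set.univ : Set ℝ)) = μ (Set.Iio (v + w)) := by
    rw [← hfst, Measure.map_apply measurable_fst measurableSet_Iio]
    congr 1
    ext z
    simp
  have hν' : π ((Set.univ : Set ℝ) ×ˢ Set.Iio w) = ν (Set.Iio w) := by
    rw [← hsnd, Measure.map_apply measurable_snd measurableSet_Iio]
    congr 1
    ext z
    simp
  simp only [measureReal_def]
  rw [hμ', hν']
  simp [measure_univ]

lemma hoeffding (hfst : π.map Prod.fst = μ) (hsnd : π.map Prod.snd = ν) (s t : ℝ) :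
    π (Set.Iio s ×ˢ Set.Iio t) ≤ min (μ (Set.Iio s)) (ν (Set.Iio t)) := by
  have hμ' : π (Set.Iio s ×ˢ (Set.univ : Set ℝ)) = μ (Set.Iio s) := by
    rw [← hfst, Measure.map_apply measurable_fst measurableSet_Iio]
    congr 1
    ext z
    simp
  have hν' : π ((Set.univ : Set ℝ) ×ˢ Set.Iio t) = ν (Set.Iio t) := by
    rw [← hsnd, Measure.map_apply measurable_snd measurableSet_Iio]
    congr 1
    ext z
    simp
  refine le_min ?_ ?_
  · rw [← hμ']
    exact measure_mono (Set.prod_mono subset_rfl (Set.subset_univ _))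
  · rw [← hν']
    exact measure_mono (Set.prod_mono (Set.subset_univ _) subset_rfl)

end coupling

section mono_coupling

variable (μ ν : Measure ℝ) [IsProbabilityMeasure μ] [IsProbabilityMeasure ν]

/-- the comonotone (quantile) coupling -/
noncomputable def cpl : Measure (ℝ × ℝ) :=
  (volume.restrict (Set.Ioo (0:ℝ) 1)).map (fun z => (qh μ z, qh ν z))

lemma measurable_pair : Measurable (fun z => (qh μ z, qh ν z)) :=
  (measurable_qh μ).prodMk (measurable_qh ν)

instance : IsProbabilityMeasure (cpl μ ν) := by
  haveI : IsProbabilityMeasure (volume.restrict (Set.Ioo (0:ℝ) 1)) :=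
    ⟨by simp [Real.volume_Ioo]⟩
  exact Measure.isProbabilityMeasure_map (measurable_pair μ ν).aemeasurable

lemma cpl_fst : (cpl μ ν).map Prod.fst = μ := by
  rw [cpl, Measure.map_map measurable_fst (measurable_pair μ ν)]
  have : (Prod.fst ∘ fun z : ℝ => (qh μ z, qh ν z)) = qh μ := rfl
  rw [this, map_qh μ]

lemma cpl_snd : (cpl μ ν).map Prod.snd = ν := by
  rw [cpl, Measure.map_map measurable_snd (measurable_pair μ ν)]
  have : (Prod.snd ∘ fun z : ℝ => (qh μ z, qh ν z)) = qh ν := rfl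
  rw [this, map_qh ν]

lemma vol_qh_lt (s : ℝ) :
    volume ({z : ℝ | qh μ z < s} ∩ Set.Ioo 0 1) = μ (Set.Iio s) := by
  conv_rhs => rw [← map_qh μ]
  rw [Measure.map_apply (measurable_qh μ) measurableSet_Iio,
    Measure.restrict_apply (measurable_qh μ measurableSet_Iio)]
  rfl

lemma cpl_Iio (s t : ℝ) :
    cpl μ ν (Set.Iio s ×ˢ Set.Iio t) = min (μ (Set.Iio s)) (ν (Set.Iio t)) := by
  rw [cpl, Measure.map_apply (measurable_pair μ ν)
      (measurableSet_Iio.prod measurableSet_Iio),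
    Measure.restrict_apply ((measurable_pair μ ν)
      (measurableSet_Iio.prod measurableSet_Iio))]
  set A := {z : ℝ | qh μ z < s} ∩ Set.Ioo 0 1 with hA
  set B := {z : ℝ | qh ν z < t} ∩ Set.Ioo 0 1 with hB
  have hset : (fun z : ℝ => (qh μ z, qh ν z)) ⁻¹' (Set.Iio s ×ˢ Set.Iio t) ∩ Set.Ioo 0 1
      = A ∩ B := by
    ext z
    simp only [hA, hB, Set.mem_inter_iff, Set.mem_preimage, Set.mem_prod, Set.mem_Iio,
      Set.mem_setOf_eq]
    tauto
  rw [hset, ← vol_qh_lt μ s, ← vol_qh_lt ν t]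
  -- comparability of A and B
  have hcomp : A ⊆ B ∨ B ⊆ A := by
    by_cases hAB : A ⊆ B
    · exact Or.inl hAB
    · right
      rw [Set.not_subset] at hAB
      obtain ⟨z₀, hz₀A, hz₀B⟩ := hAB
      intro z hz
      rcases le_total z z₀ with hzz | hzz
      · refine ⟨?_, hz.2⟩
        have := quantile_mono_onIoo μ hz.2.1 hz₀A.2.2 hzz
        rw [Set.mem_setOf_eq, qh_eq μ hz.2]
        calc quantile μ z ≤ quantile μ z₀ := this
        _ < s := by rw [← qh_eq μ hz₀A.2] ; exact hz₀A.1
      · exfalso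
        apply hz₀B
        refine ⟨?_, hz₀A.2⟩
        have := quantile_mono_onIoo ν hz₀A.2.1 hz.2.2 hzz
        rw [Set.mem_setOf_eq, qh_eq ν hz₀A.2]
        calc quantile ν z₀ ≤ quantile ν z := this
        _ < t := by rw [← qh_eq ν hz.2]; exact hz.1
  rcases hcomp with hc | hc
  · rw [Set.inter_eq_left.2 hc, min_eq_left (measure_mono hc)]
  · rw [Set.inter_eq_right.2 hc, min_eq_right (measure_mono hc)]

lemma cost_cpl {p : ℝ} (hp : 1 ≤ p) :
    ∫ z : ℝ × ℝ, dist z.1 z.2 ^ p ∂(cpl μ ν)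
      = ∫ z in Set.Ioo (0:ℝ) 1, |quantile μ z - quantile ν z| ^ p := by
  have hmeas : Measurable (fun z : ℝ × ℝ => dist z.1 z.2 ^ p) := by fun_prop
  rw [cpl, integral_map (measurable_pair μ ν).aemeasurable hmeas.aestronglyMeasurable]
  refine integral_congr_ae ?_
  filter_upwards [(ae_restrict_iff' measurableSet_Ioo).2
    (ae_of_all _ (fun z (hz : z ∈ Set.Ioo (0:ℝ) 1) => hz))] with z hz
  rw [qh_eq μ hz, qh_eq ν hz, Real.dist_eq]

end mono_coupling

section main

variable {p : ℝ}
variable {μ ν : Measure ℝ} [IsProbabilityMeasure μ] [IsProbabilityMeasure ν]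
variable {π : Measure (ℝ × ℝ)}

lemma integrable_fst_pow (hfst : π.map Prod.fst = μ)
    (hμm : Integrable (fun x : ℝ => |x| ^ p) μ) :
    Integrable (fun q : ℝ × ℝ => |q.1| ^ p) π := by
  have hm : AEStronglyMeasurable (fun x : ℝ => |x| ^ p) (π.map Prod.fst) :=
    ((by fun_prop : Measurable (fun x : ℝ => |x| ^ p))).aestronglyMeasurable
  rw [← hfst] at hμm
  exact (integrable_map_measure hm measurable_fst.aemeasurable).1 hμm

lemma integrable_snd_pow (hsnd : π.map Prod.snd = ν)
    (hνm : Integrable (fun x : ℝ => |x| ^ p) ν) :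
    Integrable (fun q : ℝ × ℝ => |q.2| ^ p) π := by
  have hm : AEStronglyMeasurable (fun x : ℝ => |x| ^ p) (π.map Prod.snd) :=
    ((by fun_prop : Measurable (fun x : ℝ => |x| ^ p))).aestronglyMeasurable
  rw [← hsnd] at hνm
  exact (integrable_map_measure hm measurable_snd.aemeasurable).1 hνm

lemma integral_fst_pow (hfst : π.map Prod.fst = μ) :
    ∫ q : ℝ × ℝ, |q.1| ^ p ∂π = ∫ x, |x| ^ p ∂μ := by
  have hm : AEStronglyMeasurable (fun x : ℝ => |x| ^ p) (π.map Prod.fst) :=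
    ((by fun_prop : Measurable (fun x : ℝ => |x| ^ p))).aestronglyMeasurable
  rw [← hfst, integral_map measurable_fst.aemeasurable hm]

lemma integral_snd_pow (hsnd : π.map Prod.snd = ν) :
    ∫ q : ℝ × ℝ, |q.2| ^ p ∂π = ∫ x, |x| ^ p ∂ν := by
  have hm : AEStronglyMeasurable (fun x : ℝ => |x| ^ p) (π.map Prod.snd) :=
    ((by fun_prop : Measurable (fun x : ℝ => |x| ^ p))).aestronglyMeasurable
  rw [← hsnd, integral_map measurable_snd.aemeasurable hm]

lemma rpow_sum_bound (hp : 1 ≤ p) {a b : ℝ} (ha : 0 ≤ a) (hb : 0 ≤ b) :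
    (a + b + 1) ^ p ≤ 3 ^ p * (1 + a ^ p + b ^ p) := by
  set m := max (max a b) 1 with hm
  have hm1 : (1:ℝ) ≤ m := le_max_right _ _
  have hma : a ≤ m := le_trans (le_max_left a b) (le_max_left _ _)
  have hmb : b ≤ m := le_trans (le_max_right a b) (le_max_left _ _)
  have h1 : a + b + 1 ≤ 3 * m := by linarith
  calc (a + b + 1) ^ p ≤ (3 * m) ^ p :=
        Real.rpow_le_rpow (by linarith) h1 (by linarith)
  _ = 3 ^ p * m ^ p := Real.mul_rpow (by norm_num) (by linarith)
  _ ≤ 3 ^ p * (1 + a ^ p + b ^ p) := by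
      refine mul_le_mul_of_nonneg_left ?_ (Real.rpow_nonneg (by norm_num) p)
      have hobs : m ^ p = 1 ∨ m ^ p = a ^ p ∨ m ^ p = b ^ p := by
        rcases max_choice (max a b) 1 with h | h
        · rcases max_choice a b with h' | h'
          · right; left; rw [hm, h, h']
          · right; right; rw [hm, h, h']
        · left; rw [hm, h, Real.one_rpow]
      have hap : 0 ≤ a ^ p := Real.rpow_nonneg ha p
      have hbp : 0 ≤ b ^ p := Real.rpow_nonneg hb p
      rcases hobs with h | h | h <;> rw [h] <;> linarith

lemma slice_norm_bound (hp : 1 ≤ p) (x y : ℝ) :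
    ∫ z : ℝ × ℝ, ‖θf y z.1 * ηf x z.2 z.1‖ ∂((volume : Measure ℝ).prod (gS p hp).measure)
      ≤ 2 * p * (|x| + |y| + 1) ^ p := by
  set R := |x| + |y| with hR
  have hR0 : 0 ≤ R := by positivity
  have h1 : ∫ z : ℝ × ℝ, ‖θf y z.1 * ηf x z.2 z.1‖
        ∂((volume : Measure ℝ).prod (gS p hp).measure)
      ≤ ∫ z : ℝ × ℝ, (Dset x y).indicator (fun _ => (1:ℝ)) z
        ∂((volume : Measure ℝ).prod (gS p hp).measure) := by
    refine integral_mono (integrable_Φ hp x y).norm (integrable_Dset_indicator hp x y)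
      fun z => ?_
    rw [Real.norm_eq_abs]
    exact Φ_bound x y z
  rw [integral_indicator_const _ (measurableSet_Dset x y), smul_eq_mul, mul_one] at h1
  refine h1.trans ?_
  -- compute/bound the measure of Dset
  have h2 : ((volume : Measure ℝ).prod (gS p hp).measure) (Dset x y)
      = volume (Set.uIoc 0 y) * (gS p hp).measure (Set.Icc (-R) R) := by
    rw [Dset, Measure.prod_prod]
  have h3 : (gS p hp).measure (Set.Icc (-R) R)
      ≤ ENNReal.ofReal (g0 p R - g0 p (-R - 1)) := by
    calc (gS p hp).measure (Set.Icc (-R) R)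
        ≤ (gS p hp).measure (Set.Ioc (-R - 1) R) :=
          measure_mono (fun u hu => ⟨by linarith [hu.1], hu.2⟩)
    _ = ENNReal.ofReal (g0 p R - g0 p (-R - 1)) := by
        rw [StieltjesFunction.measure_Ioc]; rfl
  have hvol : volume (Set.uIoc 0 y) = ENNReal.ofReal |y| := by
    rw [Set.uIoc, Real.volume_Ioc]
    congr 1
    rw [max_sub_min_eq_abs]
    simp
  have h4 : (((volume : Measure ℝ).prod (gS p hp).measure) (Dset x y)).toReal
      ≤ |y| * (g0 p R - g0 p (-R - 1)) := by
    rw [h2, hvol]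
    have hg0le : g0 p (-R - 1) ≤ g0 p R := g0_mono hp (by linarith)
    calc (ENNReal.ofReal |y| * (gS p hp).measure (Set.Icc (-R) R)).toReal
        ≤ (ENNReal.ofReal |y| * ENNReal.ofReal (g0 p R - g0 p (-R - 1))).toReal := by
          refine ENNReal.toReal_mono ?_ (mul_le_mul_right h3 _)
          exact (ENNReal.mul_lt_top ENNReal.ofReal_lt_top ENNReal.ofReal_lt_top).ne
    _ = |y| * (g0 p R - g0 p (-R - 1)) := by
          rw [← ENNReal.ofReal_mul (abs_nonneg y), ENNReal.toReal_ofReal]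
          exact mul_nonneg (abs_nonneg y) (by linarith [g0_mono hp (show -R-1 ≤ R by linarith)])
  refine h4.trans ?_
  -- bound |y| * (g0 R - g0 (-R-1)) by 2p(R+1)^p
  have hg1 : g0 p R = p * R ^ (p - 1) := by rw [g0, if_pos hR0]
  have hg2 : g0 p (-R - 1) = -(p * (R + 1) ^ (p - 1)) := by
    rw [g0, if_neg (by linarith)]
    have hsimp : -(-R - 1) = R + 1 := by ring
    rw [hsimp]
  have h5 : g0 p R - g0 p (-R - 1) ≤ 2 * p * (R + 1) ^ (p - 1) := by
    rw [hg1, hg2]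
    have : R ^ (p - 1) ≤ (R + 1) ^ (p - 1) :=
      Real.rpow_le_rpow hR0 (by linarith) (by linarith)
    have hp0 : 0 ≤ p := by linarith
    nlinarith [Real.rpow_nonneg (by linarith : (0:ℝ) ≤ R + 1) (p - 1)]
  have h6 : |y| * (g0 p R - g0 p (-R - 1)) ≤ (R + 1) * (2 * p * (R + 1) ^ (p - 1)) := by
    refine mul_le_mul (by rw [hR]; linarith [abs_nonneg x]) h5 ?_ (by linarith)
    have := g0_mono hp (by linarith : -R - 1 ≤ R)
    linarith [hg1 ▸ hg2 ▸ this]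
  refine h6.trans ?_
  have h7 : (R + 1) * (2 * p * (R + 1) ^ (p - 1)) = 2 * p * ((R + 1) ^ (p - 1) * (R + 1)) := by
    ring
  have h8 : (R + 1) ^ (p - 1) * (R + 1) = (R + 1) ^ p := by
    have hpos : (0:ℝ) < R + 1 := by linarith
    calc (R + 1) ^ (p - 1) * (R + 1) = (R + 1) ^ (p - 1) * (R + 1) ^ (1:ℝ) := by
          rw [Real.rpow_one]
    _ = (R + 1) ^ (p - 1 + 1) := (Real.rpow_add hpos _ _).symm
    _ = (R + 1) ^ p := by rw [sub_add_cancel]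
  rw [h7, h8, hR]

lemma measurable_Φbig {x y : ℝ} :
    Measurable (fun q : (ℝ × ℝ) × (ℝ × ℝ) => θf q.1.2 q.2.1 * ηf q.1.1 q.2.2 q.2.1) := by
  unfold θf ηf
  refine Measurable.mul ?_ ?_
  · exact (Measurable.ite (measurableSet_le (measurable_snd.fst) (measurable_fst.snd))
      measurable_const measurable_const).sub
      (Measurable.ite (measurableSet_le (measurable_snd.fst) measurable_const)
      measurable_const measurable_const)
  · exact (Measurable.ite (measurableSet_le ((measurable_snd.snd).add (measurable_snd.fst))
      (measurable_fst.fst)) measurable_const measurable_const).sub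
      (Measurable.ite (measurableSet_le ((measurable_snd.snd).add (measurable_snd.fst))
      measurable_const) measurable_const measurable_const)

lemma integrable_Φbig (hp : 1 ≤ p) [IsProbabilityMeasure π]
    (hfst : π.map Prod.fst = μ) (hsnd : π.map Prod.snd = ν)
    (hμm : Integrable (fun x : ℝ => |x| ^ p) μ) (hνm : Integrable (fun x : ℝ => |x| ^ p) ν) :
    Integrable (fun q : (ℝ × ℝ) × (ℝ × ℝ) => θf q.1.2 q.2.1 * ηf q.1.1 q.2.2 q.2.1)
      (π.prod ((volume : Measure ℝ).prod (gS p hp).measure)) := by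
  rw [integrable_prod_iff (measurable_Φbig (x := 0) (y := 0)).aestronglyMeasurable]
  constructor
  · exact ae_of_all _ fun q1 => integrable_Φ hp q1.1 q1.2
  · have hbint : Integrable (fun q : ℝ × ℝ =>
        (2 * p * 3 ^ p) * (1 + |q.1| ^ p + |q.2| ^ p)) π :=
      (((integrable_const (1:ℝ)).add (integrable_fst_pow hfst hμm)).add
        (integrable_snd_pow hsnd hνm)).const_mul _
    refine Integrable.mono' hbint
      ((measurable_Φbig (x := 0) (y := 0)).norm.aestronglyMeasurable.integral_prod_right')
      (ae_of_all _ fun q1 => ?_)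
    rw [Real.norm_eq_abs,
      abs_of_nonneg (integral_nonneg (fun _ => norm_nonneg _))]
    have h2p : (0:ℝ) ≤ 2 * p := by linarith
    calc ∫ q2 : ℝ × ℝ, ‖θf q1.2 q2.1 * ηf q1.1 q2.2 q2.1‖
          ∂((volume : Measure ℝ).prod (gS p hp).measure)
        ≤ 2 * p * (|q1.1| + |q1.2| + 1) ^ p := slice_norm_bound hp q1.1 q1.2
    _ ≤ 2 * p * (3 ^ p * (1 + |q1.1| ^ p + |q1.2| ^ p)) :=
        mul_le_mul_of_nonneg_left (rpow_sum_bound hp (abs_nonneg _) (abs_nonneg _)) h2p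
    _ = (2 * p * 3 ^ p) * (1 + |q1.1| ^ p + |q1.2| ^ p) := by ring

lemma cost_eq (hp : 1 ≤ p) [IsProbabilityMeasure π]
    (hfst : π.map Prod.fst = μ) (hsnd : π.map Prod.snd = ν)
    (hμm : Integrable (fun x : ℝ => |x| ^ p) μ) (hνm : Integrable (fun x : ℝ => |x| ^ p) ν) :
    ∫ z : ℝ × ℝ, dist z.1 z.2 ^ p ∂π
      = (∫ x, |x| ^ p ∂μ) + (∫ x, |x| ^ p ∂ν)
        - ∫ q2 : ℝ × ℝ, (∫ q1 : ℝ × ℝ, θf q1.2 q2.1 * ηf q1.1 q2.2 q2.1 ∂π)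
            ∂((volume : Measure ℝ).prod (gS p hp).measure) := by
  have hbig := integrable_Φbig hp hfst hsnd hμm hνm
  have hpt : ∀ z : ℝ × ℝ, dist z.1 z.2 ^ p
      = |z.1| ^ p + |z.2| ^ p - ∫ q2 : ℝ × ℝ, θf z.2 q2.1 * ηf z.1 q2.2 q2.1
          ∂((volume : Measure ℝ).prod (gS p hp).measure) := fun z => by
    rw [Real.dist_eq]; exact claim3 hp z.1 z.2
  rw [funext hpt]
  have hTint : Integrable (fun z : ℝ × ℝ => ∫ q2 : ℝ × ℝ, θf z.2 q2.1 * ηf z.1 q2.2 q2.1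
      ∂((volume : Measure ℝ).prod (gS p hp).measure)) π := hbig.integral_prod_left
  have hf := integrable_fst_pow hfst hμm
  have hs := integrable_snd_pow hsnd hνm
  have hsum : Integrable (fun q : ℝ × ℝ => |q.1| ^ p + |q.2| ^ p) π := hf.add hs
  rw [integral_sub hsum hTint, integral_add hf hs, integral_fst_pow hfst,
    integral_snd_pow hsnd]
  congr 1
  exact integral_integral_swap
    (f := fun q1 q2 : ℝ × ℝ => θf q1.2 q2.1 * ηf q1.1 q2.2 q2.1) hbig

lemma cost_cpl_le (hp : 1 ≤ p) [IsProbabilityMeasure π]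
    (hfst : π.map Prod.fst = μ) (hsnd : π.map Prod.snd = ν)
    (hμm : Integrable (fun x : ℝ => |x| ^ p) μ) (hνm : Integrable (fun x : ℝ => |x| ^ p) ν) :
    ∫ z : ℝ × ℝ, dist z.1 z.2 ^ p ∂(cpl μ ν) ≤ ∫ z : ℝ × ℝ, dist z.1 z.2 ^ p ∂π := by
  rw [cost_eq hp hfst hsnd hμm hνm, cost_eq hp (cpl_fst μ ν) (cpl_snd μ ν) hμm hνm]
  have hkey : ∀ q2 : ℝ × ℝ, (∫ q1 : ℝ × ℝ, θf q1.2 q2.1 * ηf q1.1 q2.2 q2.1 ∂π)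
      ≤ ∫ q1 : ℝ × ℝ, θf q1.2 q2.1 * ηf q1.1 q2.2 q2.1 ∂(cpl μ ν) := by
    intro q2
    rw [inner_expand hfst hsnd q2.1 q2.2, inner_expand (cpl_fst μ ν) (cpl_snd μ ν) q2.1 q2.2]
    have h1 : (π (Set.Iio (q2.2 + q2.1) ×ˢ Set.Iio q2.1)).toReal
        ≤ ((cpl μ ν) (Set.Iio (q2.2 + q2.1) ×ˢ Set.Iio q2.1)).toReal := by
      rw [cpl_Iio]
      refine ENNReal.toReal_mono ?_ (hoeffding hfst hsnd _ _)
      exact ((min_le_left _ _).trans_lt (measure_lt_top μ _)).ne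
    linarith
  refine sub_le_sub_left (integral_mono ?_ ?_ hkey) _
  · exact (integrable_Φbig hp hfst hsnd hμm hνm).integral_prod_right
  · exact (integrable_Φbig hp (cpl_fst μ ν) (cpl_snd μ ν) hμm hνm).integral_prod_right

end main


end WQaux

/-- One-dimensional Wasserstein distance via quantile functions:
`W_p^p(μ, ν) = ∫_0^1 |F_μ⁻¹(z) − F_ν⁻¹(z)|^p dz`. -/
theorem wasserstein_one_dim_quantile
    (p : ℝ) (hp : 1 ≤ p) (μ ν : Measure ℝ)
    [IsProbabilityMeasure μ] [IsProbabilityMeasure ν]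
    (hμ : Integrable (fun x : ℝ => |x| ^ p) μ)
    (hν : Integrable (fun x : ℝ => |x| ^ p) ν) :
    WpPow p μ ν = ∫ z in Set.Ioo (0 : ℝ) 1, |quantile μ z - quantile ν z| ^ p := by
  have hmem : ∃ π : Measure (ℝ × ℝ), π.map Prod.fst = μ ∧ π.map Prod.snd = ν ∧
      (∫ z in Set.Ioo (0 : ℝ) 1, |quantile μ z - quantile ν z| ^ p)
        = ∫ z : ℝ × ℝ, dist z.1 z.2 ^ p ∂π :=
    ⟨WQaux.cpl μ ν, WQaux.cpl_fst μ ν, WQaux.cpl_snd μ ν, (WQaux.cost_cpl (p := p) μ ν hp).symm⟩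
  rw [WpPow]
  refine le_antisymm (csInf_le ⟨0, ?_⟩ hmem) (le_csInf ⟨_, hmem⟩ ?_)
  · rintro c ⟨π', -, -, rfl⟩
    exact integral_nonneg fun z => Real.rpow_nonneg dist_nonneg p
  · rintro c ⟨π', h1, h2, rfl⟩
    haveI : IsProbabilityMeasure π' := by
      constructor
      have h3 : π'.map Prod.fst Set.univ = 1 := by rw [h1]; exact measure_univ
      rwa [Measure.map_apply measurable_fst MeasurableSet.univ, Set.preimage_univ] at h3
    rw [← WQaux.cost_cpl (p := p) μ ν hp]
    exact WQaux.cost_cpl_le hp h1 h2 hμ hν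
end

section
/- (Cramér–Wold) Two probability measures P and Q on ℝ^k are equal if and only if for every vector ψ ∈ ℝ^k, the pushforwards of P and Q under the linear map x ↦ ⟨ψ, x⟩ are equal as probability measures on ℝ. -/
set_option maxHeartbeats 1000000

open MeasureTheory Real Metric Set
open scoped RealInnerProductSpace FourierTransform ContDiff Manifold

namespace CramerWoldAux

variable {k : ℕ}

local notation "V" => EuclideanSpace ℝ (Fin k)

/-- A smooth compactly supported function as a Schwartz map. -/
noncomputable def toSchwartz (f : V → ℂ) (h1 : ContDiff ℝ ∞ f) (h2 : HasCompactSupport f) :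
    SchwartzMap V ℂ where
  toFun := f
  smooth' := h1
  decay' := by
    intro m n
    have hc : Continuous fun x : V => ‖x‖ ^ m * ‖iteratedFDeriv ℝ n f x‖ :=
      (continuous_norm.pow m).mul (h1.continuous_iteratedFDeriv (mod_cast le_top)).norm
    have hcs : HasCompactSupport fun x : V => ‖x‖ ^ m * ‖iteratedFDeriv ℝ n f x‖ :=
      HasCompactSupport.mul_left ((h2.iteratedFDeriv n).norm)
    rcases hc.bounded_above_of_compact_support hcs with ⟨C, hC⟩
    exact ⟨C, fun x => le_trans (le_abs_self _) (hC x)⟩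

@[simp] lemma toSchwartz_apply (f : V → ℂ) (h1 h2) (x : V) : toSchwartz f h1 h2 x = f x := rfl

/-- Fubini: integrating the Fourier transform of a Schwartz function against a
probability measure. -/
lemma integral_fourier (μ : Measure V) [IsProbabilityMeasure μ] (f : SchwartzMap V ℂ) :
    ∫ x, 𝓕 (⇑f) x ∂μ = ∫ ψ, (∫ x, ((𝐞 (-⟪ψ, x⟫) : Circle) : ℂ) ∂μ) * f ψ := by
  have hcont : Continuous fun p : V × V => 𝐞 (-⟪p.2, p.1⟫) • f p.2 := by
    apply Continuous.smul
    · exact (Real.continuous_fourierChar.comp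
        (continuous_inner.comp ((continuous_snd : Continuous (Prod.snd : V × V → V)).prodMk continuous_fst)).neg).subtype_val
    · exact f.continuous.comp continuous_snd
  have hint : Integrable (fun p : V × V => 𝐞 (-⟪p.2, p.1⟫) • f p.2) (μ.prod volume) := by
    refine (integrable_prod_iff hcont.aestronglyMeasurable).2 ⟨?_, ?_⟩
    · exact ae_of_all _ fun x => (Real.fourierIntegral_convergent_iff x).2 f.integrable
    · apply Integrable.congr (integrable_const (∫ ψ : V, ‖f ψ‖))
      refine ae_of_all _ fun x => ?_
      simp [Circle.norm_smul]
  calc ∫ x, 𝓕 (⇑f) x ∂μ = ∫ x, ∫ ψ, 𝐞 (-⟪ψ, x⟫) • f ψ ∂volume ∂μ := by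
        simp_rw [Real.fourier_eq]
    _ = ∫ ψ, ∫ x, 𝐞 (-⟪ψ, x⟫) • f ψ ∂μ ∂volume :=
        integral_integral_swap (f := fun x ψ => 𝐞 (-⟪ψ, x⟫) • f ψ) hint
    _ = ∫ ψ, (∫ x, ((𝐞 (-⟪ψ, x⟫) : Circle) : ℂ) ∂μ) * f ψ := by
        congr 1
        funext ψ
        simp_rw [Circle.smul_def]
        exact integral_mul_const _ _

lemma integral_ofReal'' (μ : Measure V) (f : V → ℝ) :
    ∫ x, (f x : ℂ) ∂μ = ((∫ x, f x ∂μ : ℝ) : ℂ) :=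
  integral_ofReal

/-- Uniqueness of measures from characteristic functions. -/
theorem measure_eq_of_char (P Q : Measure V)
    [IsProbabilityMeasure P] [IsProbabilityMeasure Q]
    (hchar : ∀ ψ : V, ∫ x, ((𝐞 (-⟪ψ, x⟫) : Circle) : ℂ) ∂P
        = ∫ x, ((𝐞 (-⟪ψ, x⟫) : Circle) : ℂ) ∂Q) : P = Q := by
  -- integrals of Schwartz functions agree
  have hschwartz : ∀ g : SchwartzMap V ℂ, ∫ x, g x ∂P = ∫ x, g x ∂Q := by
    intro g
    have hg : 𝓕 (⇑((SchwartzMap.fourierTransformCLE ℂ (SchwartzMap V ℂ)).symm g)) = ⇑g := by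
      rw [← SchwartzMap.fourier_coe]
      exact congrArg _ (FourierTransform.fourier_fourierInv_eq g)
    calc ∫ x, g x ∂P = ∫ x, 𝓕 (⇑((SchwartzMap.fourierTransformCLE ℂ (SchwartzMap V ℂ)).symm g)) x ∂P := by
          rw [hg]
      _ = ∫ x, 𝓕 (⇑((SchwartzMap.fourierTransformCLE ℂ (SchwartzMap V ℂ)).symm g)) x ∂Q := by
          rw [integral_fourier, integral_fourier]
          congr 1
          funext ψ
          rw [hchar]
      _ = ∫ x, g x ∂Q := by rw [hg]
  -- integrals of smooth compactly supported real functions agree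
  have hsmooth : ∀ g : V → ℝ, ContDiff ℝ ∞ g → HasCompactSupport g →
      ∫ x, g x ∂P = ∫ x, g x ∂Q := by
    intro g hg1 hg2
    have h1 : ContDiff ℝ ∞ fun x => (g x : ℂ) :=
      Complex.ofRealCLM.contDiff.comp hg1
    have h2 : HasCompactSupport fun x => (g x : ℂ) :=
      HasCompactSupport.comp_left (g := Complex.ofReal) hg2 Complex.ofReal_zero
    have := hschwartz (toSchwartz _ h1 h2)
    simp only [toSchwartz_apply] at this
    rw [integral_ofReal'', integral_ofReal''] at this
    exact_mod_cast this
  -- measures of compact sets agree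
  have hcompact : ∀ K : Set V, IsCompact K → P K = Q K := by
    intro K hK
    -- smooth Urysohn functions
    have hg : ∀ n : ℕ, ∃ g : V → ℝ, ContDiff ℝ ∞ g ∧ HasCompactSupport g ∧
        Set.EqOn g 1 K ∧ (∀ x, g x ∈ Set.Icc (0:ℝ) 1) ∧
        (∀ x, x ∉ Metric.thickening (1 / (n + 1) : ℝ) K → g x = 0) := by
      intro n
      have hδ : (0:ℝ) < 1 / (n + 1) := by positivity
      obtain ⟨g, hg0, hg1, hg01⟩ := exists_contMDiffMap_zero_one_of_isClosed (n := ⊤) (𝓘(ℝ, V))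
        (isOpen_thickening (δ := 1 / (n + 1)) (E := K)).isClosed_compl hK.isClosed
        (disjoint_compl_left.mono_right (self_subset_thickening hδ K))
      refine ⟨g, ?_, ?_, hg1, hg01, fun x hx => hg0 hx⟩
      · exact contMDiff_iff_contDiff.1 g.contMDiff
      · refine HasCompactSupport.intro (hK.cthickening (r := 1 / (n + 1))) fun x hx => ?_
        exact hg0 fun hth => hx (Metric.thickening_subset_cthickening _ _ hth)
    choose g hg1 hg2 hgK hg01 hg0 using hg
    -- ∫ gₙ → measure of K
    have hconv : ∀ μ : Measure V, IsProbabilityMeasure μ →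
        Filter.Tendsto (fun n => ∫ x, g n x ∂μ) Filter.atTop (nhds (μ K).toReal) := by
      intro μ hμ
      have : Filter.Tendsto (fun n => ∫ x, g n x ∂μ) Filter.atTop
          (nhds (∫ x, Set.indicator K (1 : V → ℝ) x ∂μ)) := by
        apply tendsto_integral_of_dominated_convergence (fun _ => (1:ℝ))
        · exact fun n => ((hg1 n).continuous).aestronglyMeasurable
        · exact integrable_const 1
        · intro n
          refine ae_of_all _ fun x => ?_
          have h01 := hg01 n x
          rw [Real.norm_eq_abs, abs_le]
          constructor <;> linarith [h01.1, h01.2]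
        · refine ae_of_all _ fun x => ?_
          by_cases hx : x ∈ K
          · simp only [Set.indicator_of_mem hx]
            have h1 : ∀ n, g n x = 1 := fun n => hgK n hx
            simp [h1]
          · simp only [Set.indicator_of_notMem hx]
            apply Filter.Tendsto.congr' _ tendsto_const_nhds
            rcases Set.eq_empty_or_nonempty K with hKe | hKne
            · filter_upwards with n
              refine (hg0 n x fun hth => ?_).symm
              simp [hKe] at hth
            · have hpos : 0 < Metric.infDist x K :=
                (hK.isClosed.notMem_iff_infDist_pos hKne).1 hx
              obtain ⟨N, hN⟩ := exists_nat_gt (1 / Metric.infDist x K)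
              filter_upwards [Filter.eventually_ge_atTop N] with n hn
              refine (hg0 n x fun hth => ?_).symm
              rw [Metric.mem_thickening_iff_infDist_lt hKne] at hth
              have hle : (1:ℝ) / (n + 1) ≤ 1 / (N + 1) := by
                apply one_div_le_one_div_of_le (by positivity)
                have : (N:ℝ) ≤ n := Nat.cast_le.2 hn
                linarith
              have hlt : (1:ℝ) / (N + 1) < Metric.infDist x K := by
                rw [div_lt_iff₀ (by positivity)]
                rw [div_lt_iff₀ hpos] at hN
                nlinarith [hpos]
              linarith
      rwa [MeasureTheory.integral_indicator_one hK.isClosed.measurableSet] at this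
    have h1 := hconv P inferInstance
    have h2 := hconv Q inferInstance
    have := tendsto_nhds_unique (h1.congr fun n => hsmooth _ (hg1 n) (hg2 n)) h2
    exact (ENNReal.toReal_eq_toReal_iff' (measure_ne_top P K) (measure_ne_top Q K)).1 this
  -- measures of closed sets agree
  have hclosed : ∀ F : Set V, IsClosed F → P F = Q F := by
    intro F hF
    have hmono : Monotone fun n : ℕ => F ∩ Metric.closedBall 0 n := by
      intro a b hab
      exact Set.inter_subset_inter_right F
        (Metric.closedBall_subset_closedBall (by exact_mod_cast hab))
    have hunion : (⋃ n : ℕ, F ∩ Metric.closedBall 0 n) = F := by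
      rw [← Set.inter_iUnion]
      refine Set.inter_eq_self_of_subset_left fun x _ => ?_
      obtain ⟨n, hn⟩ := exists_nat_ge ‖x‖
      exact Set.mem_iUnion.2 ⟨n, by simpa [Metric.mem_closedBall, dist_zero_right] using hn⟩
    have hcomp : ∀ n : ℕ, IsCompact (F ∩ Metric.closedBall 0 n) := fun n =>
      (isCompact_closedBall (0:V) n).inter_left hF
    have t1 := MeasureTheory.tendsto_measure_iUnion_atTop (μ := P) hmono
    have t2 := MeasureTheory.tendsto_measure_iUnion_atTop (μ := Q) hmono
    rw [hunion] at t1 t2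
    exact tendsto_nhds_unique (t1.congr fun n => hcompact _ (hcomp n)) t2
  refine MeasureTheory.ext_of_generate_finite {s : Set V | IsClosed s} ?_ isPiSystem_isClosed
    (fun s hs => hclosed s hs) (by simp)
  exact (BorelSpace.measurable_eq (α := V)).trans borel_eq_generateFrom_isClosed

end CramerWoldAux

open CramerWoldAux

/-- Cramér–Wold: two probability measures on ℝ^k are equal iff all of their
one-dimensional linear projections agree. -/
theorem cramer_wold
    {k : ℕ} (P Q : Measure (EuclideanSpace ℝ (Fin k)))
    [IsProbabilityMeasure P] [IsProbabilityMeasure Q] :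
    P = Q ↔ ∀ ψ : EuclideanSpace ℝ (Fin k),
      P.map (fun x => ⟪ψ, x⟫) = Q.map (fun x => ⟪ψ, x⟫) := by
  constructor
  · rintro rfl _; rfl
  · intro h
    apply measure_eq_of_char
    intro ψ
    have hg : Continuous fun t : ℝ => ((𝐞 (-t) : Circle) : ℂ) := by
      apply Continuous.subtype_val
      exact Real.continuous_fourierChar.comp continuous_neg
    have hm : Continuous fun x : EuclideanSpace ℝ (Fin k) => ⟪ψ, x⟫ :=
      continuous_const.inner continuous_id
    have e1 := integral_map (φ := fun x => ⟪ψ, x⟫) (μ := P) hm.aemeasurable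
      (f := fun t : ℝ => ((𝐞 (-t) : Circle) : ℂ)) hg.aestronglyMeasurable
    have e2 := integral_map (φ := fun x => ⟪ψ, x⟫) (μ := Q) hm.aemeasurable
      (f := fun t : ℝ => ((𝐞 (-t) : Circle) : ℂ)) hg.aestronglyMeasurable
    rw [← e1, ← e2, h ψ]
end
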